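/- arXiv:math/0611141 — 6 statements merged into one kernel-verified Lean document; each statement's English description precedes it below -/
import Mathlib

section
/- Suppose the walk is transient in the sense that ∫_0^∞ P_t(0) dt < ∞. Then for every integer m ≥ 3, ∫_0^∞ t · (Σ_{i∈ℤ^d} P_t(i)^m) dt < ∞. (This expresses the strong transience of the differences random walk of m ≥ 3 independent copies of a symmetric transient random walk.) -/
open scoped BigOperators

/-- The `n`-fold convolution power of a step distribution `p` on `ℤ^d`. -/
noncomputable def convPow {d : ℕ} (p : (Fin d → ℤ) → ℝ) : ℕ → (Fin d → ℤ) → ℝ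
  | 0 => fun i => if i = 0 then 1 else 0
  | n + 1 => fun i => ∑' j : Fin d → ℤ, p j * convPow p n (i - j)

/-- The Poissonized (rate-1 continuous-time) transition kernel
`P_t(i) = ∑_{n} e^{-t} t^n/n! p^{*n}(i)`. -/
noncomputable def Pker {d : ℕ} (p : (Fin d → ℤ) → ℝ) (t : ℝ) (i : Fin d → ℤ) : ℝ :=
  ∑' n : ℕ, Real.exp (-t) * (t ^ n / (n.factorial : ℝ)) * convPow p n i


open MeasureTheory
open scoped ENNReal

namespace StrongTransienceAux

variable {d : ℕ}

/-- ENNReal-valued convolution on the lattice. -/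
noncomputable def conv (a b : (Fin d → ℤ) → ℝ≥0∞) : (Fin d → ℤ) → ℝ≥0∞ :=
  fun i => ∑' j, a j * b (i - j)

lemma tsum_conv (a b : (Fin d → ℤ) → ℝ≥0∞) :
    ∑' i, conv a b i = (∑' i, a i) * (∑' i, b i) := by
  unfold conv
  rw [ENNReal.tsum_comm]
  have h1 : ∀ j, ∑' i, a j * b (i - j) = a j * ∑' i, b i := by
    intro j
    rw [ENNReal.tsum_mul_left]
    congr 1
    exact (Equiv.subRight j).tsum_eq b
  simp_rw [h1]
  rw [ENNReal.tsum_mul_right]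

lemma conv_assoc (a b c : (Fin d → ℤ) → ℝ≥0∞) :
    conv (conv a b) c = conv a (conv b c) := by
  funext i
  unfold conv
  have h0 : ∀ u, (∑' j, a j * b (u - j)) * c (i - u)
      = ∑' j, a j * b (u - j) * c (i - u) := fun u => ENNReal.tsum_mul_right.symm
  simp_rw [h0]
  rw [ENNReal.tsum_comm]
  congr 1
  funext j
  rw [← (Equiv.addRight j).tsum_eq fun u => a j * b (u - j) * c (i - u),
    ← ENNReal.tsum_mul_left]
  congr 1
  funext v
  have h2 : i - (v + j) = i - j - v := by abel
  simp only [Equiv.coe_addRight, add_sub_cancel_right, h2, mul_assoc]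

lemma conv_delta (a : (Fin d → ℤ) → ℝ≥0∞) :
    conv (fun i => if i = 0 then 1 else 0) a = a := by
  funext i
  unfold conv
  rw [tsum_eq_single 0 (by intro j hj; simp [hj])]
  simp

/-- ENNReal convolution powers. -/
noncomputable def F (q : (Fin d → ℤ) → ℝ≥0∞) : ℕ → (Fin d → ℤ) → ℝ≥0∞
  | 0 => fun i => if i = 0 then 1 else 0
  | n + 1 => conv q (F q n)

lemma F_add (q : (Fin d → ℤ) → ℝ≥0∞) (n m : ℕ) :
    F q (n + m) = conv (F q n) (F q m) := by
  induction n with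
  | zero => simp [F, conv_delta]
  | succ n ih =>
      have : n + 1 + m = (n + m) + 1 := by omega
      rw [this]
      show conv q (F q (n + m)) = conv (conv q (F q n)) (F q m)
      rw [ih, conv_assoc]

lemma tsum_F (q : (Fin d → ℤ) → ℝ≥0∞) (hq1 : ∑' i, q i = 1) (n : ℕ) :
    ∑' i, F q n i = 1 := by
  induction n with
  | zero => simpa [F] using tsum_ite_eq (0 : Fin d → ℤ) (1 : ℝ≥0∞)
  | succ n ih => show ∑' i, conv q (F q n) i = 1; rw [tsum_conv, hq1, ih, one_mul]

lemma F_le_one (q : (Fin d → ℤ) → ℝ≥0∞) (hq1 : ∑' i, q i = 1) (n : ℕ) (i : Fin d → ℤ) :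
    F q n i ≤ 1 := by
  rw [← tsum_F q hq1 n]; exact ENNReal.le_tsum i

lemma F_neg (q : (Fin d → ℤ) → ℝ≥0∞) (hqs : ∀ i, q (-i) = q i) (n : ℕ)
    (i : Fin d → ℤ) : F q n (-i) = F q n i := by
  induction n generalizing i with
  | zero => simp [F, neg_eq_zero]
  | succ n ih =>
      show ∑' j, q j * F q n (-i - j) = ∑' j, q j * F q n (i - j)
      rw [← (Equiv.neg (Fin d → ℤ)).tsum_eq fun j => q j * F q n (-i - j)]
      congr 1
      funext j
      have h1 : -i - -j = -(i - j) := by abel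
      simp only [Equiv.neg_apply, hqs, h1, ih]

/-- Poisson coefficients. -/
noncomputable def pc (t : ℝ) (n : ℕ) : ℝ≥0∞ :=
  ENNReal.ofReal (Real.exp (-t) * (t ^ n / (n.factorial : ℝ)))

lemma pc_ne_top (t : ℝ) (n : ℕ) : pc t n ≠ ⊤ := ENNReal.ofReal_ne_top

lemma tsum_pc {t : ℝ} (ht : 0 ≤ t) : ∑' n, pc t n = 1 := by
  unfold pc
  have h1 : ∀ n : ℕ, ENNReal.ofReal (Real.exp (-t) * (t ^ n / (n.factorial : ℝ)))
      = ENNReal.ofReal (Real.exp (-t)) * ENNReal.ofReal (t ^ n / (n.factorial : ℝ)) :=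
    fun n => ENNReal.ofReal_mul (Real.exp_nonneg _)
  simp_rw [h1]
  rw [ENNReal.tsum_mul_left, ← ENNReal.ofReal_tsum_of_nonneg
    (fun n => by positivity) (Real.summable_pow_div_factorial t)]
  have h2 : ∑' n : ℕ, t ^ n / (n.factorial : ℝ) = Real.exp t := by
    rw [Real.exp_eq_exp_ℝ, NormedSpace.exp_eq_tsum_div]
  rw [h2, ← ENNReal.ofReal_mul (Real.exp_nonneg _), ← Real.exp_add,
    neg_add_cancel, Real.exp_zero, ENNReal.ofReal_one]

lemma pc_binom {t s : ℝ} (ht : 0 ≤ t) (hs : 0 ≤ s) (n : ℕ) :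
    pc (t + s) n = ∑ k ∈ Finset.range (n + 1), pc t k * pc s (n - k) := by
  unfold pc
  have key : Real.exp (-(t + s)) * ((t + s) ^ n / (n.factorial : ℝ))
      = ∑ k ∈ Finset.range (n + 1),
        (Real.exp (-t) * (t ^ k / (k.factorial : ℝ))) *
          (Real.exp (-s) * (s ^ (n - k) / ((n - k).factorial : ℝ))) := by
    rw [add_pow]
    rw [Finset.sum_div, Finset.mul_sum]
    refine Finset.sum_congr rfl fun k hk => ?_
    have hkn : k ≤ n := Nat.lt_succ_iff.mp (Finset.mem_range.mp hk)
    have hfac : ((n.choose k : ℝ)) * (k.factorial : ℝ) * ((n - k).factorial : ℝ)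
        = (n.factorial : ℝ) := by
      rw [← Nat.cast_mul, ← Nat.cast_mul, Nat.choose_mul_factorial_mul_factorial hkn]
    have hk0 : (k.factorial : ℝ) ≠ 0 := Nat.cast_ne_zero.mpr k.factorial_ne_zero
    have hnk0 : ((n - k).factorial : ℝ) ≠ 0 := Nat.cast_ne_zero.mpr (n - k).factorial_ne_zero
    have hchoose : (n.choose k : ℝ) = (n.factorial : ℝ) / ((k.factorial : ℝ) * ((n - k).factorial : ℝ)) := by
      rw [eq_div_iff (by positivity)]
      linarith [hfac]
    have hn0 : (n.factorial : ℝ) ≠ 0 := Nat.cast_ne_zero.mpr n.factorial_ne_zero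
    rw [hchoose, neg_add, Real.exp_add]
    field_simp
  rw [key, ENNReal.ofReal_sum_of_nonneg (fun k _ => by positivity)]
  exact Finset.sum_congr rfl fun k _ => ENNReal.ofReal_mul (by positivity)

/-- ENNReal continuous-time kernel. -/
noncomputable def G (q : (Fin d → ℤ) → ℝ≥0∞) (t : ℝ) (i : Fin d → ℤ) : ℝ≥0∞ :=
  ∑' n, pc t n * F q n i

lemma tsum_G (q : (Fin d → ℤ) → ℝ≥0∞) (hq1 : ∑' i, q i = 1) {t : ℝ} (ht : 0 ≤ t) :
    ∑' i, G q t i = 1 := by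
  unfold G
  rw [ENNReal.tsum_comm]
  simp_rw [ENNReal.tsum_mul_left, tsum_F q hq1, mul_one]
  exact tsum_pc ht

lemma G_le_one (q : (Fin d → ℤ) → ℝ≥0∞) (hq1 : ∑' i, q i = 1) {t : ℝ} (ht : 0 ≤ t)
    (i : Fin d → ℤ) : G q t i ≤ 1 := by
  rw [← tsum_G q hq1 ht]; exact ENNReal.le_tsum i

lemma G_ne_top (q : (Fin d → ℤ) → ℝ≥0∞) (hq1 : ∑' i, q i = 1) {t : ℝ} (ht : 0 ≤ t)
    (i : Fin d → ℤ) : G q t i ≠ ⊤ :=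
  (lt_of_le_of_lt (G_le_one q hq1 ht i) ENNReal.one_lt_top).ne

lemma G_neg (q : (Fin d → ℤ) → ℝ≥0∞) (hqs : ∀ i, q (-i) = q i) (t : ℝ)
    (i : Fin d → ℤ) : G q t (-i) = G q t i := by
  unfold G; simp_rw [F_neg q hqs]

lemma G_semigroup (q : (Fin d → ℤ) → ℝ≥0∞) {t s : ℝ} (ht : 0 ≤ t) (hs : 0 ≤ s)
    (i : Fin d → ℤ) : G q (t + s) i = conv (G q t) (G q s) i := by
  classical
  have step1 : conv (G q t) (G q s) i
      = ∑' (a : ℕ) (b : ℕ), pc t a * pc s b * F q (a + b) i := by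
    unfold conv G
    have h1 : ∀ j, (∑' a, pc t a * F q a j) * (∑' b, pc s b * F q b (i - j))
        = ∑' (a : ℕ) (b : ℕ), (pc t a * F q a j) * (pc s b * F q b (i - j)) := by
      intro j
      rw [← ENNReal.tsum_mul_right]
      exact tsum_congr fun a => ENNReal.tsum_mul_left.symm
    simp_rw [h1]
    rw [ENNReal.tsum_comm]
    refine tsum_congr fun a => ?_
    rw [ENNReal.tsum_comm]
    refine tsum_congr fun b => ?_
    have h2 : ∀ j, (pc t a * F q a j) * (pc s b * F q b (i - j))
        = pc t a * pc s b * (F q a j * F q b (i - j)) := fun j => by ring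
    simp_rw [h2]
    rw [ENNReal.tsum_mul_left]
    congr 1
    exact congrFun (F_add q a b).symm i ▸ rfl
  rw [step1]
  -- regroup the double sum along antidiagonals
  set g : ℕ × ℕ → ℝ≥0∞ := fun x =>
    if x.2 ≤ x.1 then pc t x.2 * pc s (x.1 - x.2) * F q x.1 i else 0 with hg
  have hι : Function.Injective (fun ab : ℕ × ℕ => ((ab.1 + ab.2, ab.1) : ℕ × ℕ)) := by
    intro x y h
    simp only [Prod.mk.injEq] at h
    exact Prod.ext h.2 (by omega)
  have hsupp : Function.support g ⊆
      Set.range (fun ab : ℕ × ℕ => ((ab.1 + ab.2, ab.1) : ℕ × ℕ)) := by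
    intro x hx
    rw [Function.mem_support, hg] at hx
    by_cases hle : x.2 ≤ x.1
    · exact ⟨(x.2, x.1 - x.2), by simp [Nat.add_sub_cancel' hle]⟩
    · simp [hle] at hx
  have hre : ∑' ab : ℕ × ℕ, g (ab.1 + ab.2, ab.1) = ∑' x : ℕ × ℕ, g x :=
    hι.tsum_eq hsupp
  have hlhs : ∑' (a : ℕ) (b : ℕ), pc t a * pc s b * F q (a + b) i
      = ∑' ab : ℕ × ℕ, g (ab.1 + ab.2, ab.1) := by
    rw [ENNReal.tsum_prod']
    refine tsum_congr fun a => tsum_congr fun b => ?_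
    simp [hg, Nat.le_add_right]
  rw [hlhs, hre, ENNReal.tsum_prod']
  unfold G
  refine tsum_congr fun n => ?_
  have hin : ∑' k : ℕ, g (n, k) = ∑ k ∈ Finset.range (n + 1), g (n, k) := by
    refine tsum_eq_sum fun k hk => ?_
    rw [Finset.mem_range] at hk
    rw [hg]
    exact if_neg (by simpa using by omega)
  rw [hin, pc_binom ht hs, Finset.sum_mul]
  refine Finset.sum_congr rfl fun k hk => ?_
  simp only [hg]
  rw [if_pos (by simpa using Nat.lt_succ_iff.mp (Finset.mem_range.mp hk))]

lemma tsum_cauchy_schwarz (a b : (Fin d → ℤ) → ℝ≥0∞) :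
    ∑' j, a j * b j ≤ (∑' j, a j ^ 2) ^ ((1 : ℝ) / 2) * (∑' j, b j ^ 2) ^ ((1 : ℝ) / 2) := by
  have hpq : Real.HolderConjugate 2 2 := Real.HolderConjugate.two_two
  have h := ENNReal.lintegral_mul_le_Lp_mul_Lq (Measure.count : Measure (Fin d → ℤ)) hpq
    (measurable_of_countable a).aemeasurable (measurable_of_countable b).aemeasurable
  simp only [Pi.mul_apply] at h
  rw [lintegral_count, lintegral_count, lintegral_count] at h
  refine le_trans h ?_
  have h2 : ∀ x : ℝ≥0∞, x ^ (2 : ℝ) = x ^ (2 : ℕ) := fun x => by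
    rw [← ENNReal.rpow_natCast]; norm_num
  simp_rw [h2]
  exact le_refl _

lemma tsum_G_sq (q : (Fin d → ℤ) → ℝ≥0∞) (hqs : ∀ i, q (-i) = q i) {t : ℝ} (ht : 0 ≤ t) :
    ∑' i, G q t i ^ 2 = G q (2 * t) 0 := by
  rw [two_mul, G_semigroup q ht ht]
  unfold conv
  refine (tsum_congr fun j => ?_).symm
  rw [zero_sub, G_neg q hqs, sq]

lemma G_le_sqrt (q : (Fin d → ℤ) → ℝ≥0∞) (hqs : ∀ i, q (-i) = q i) {t u : ℝ}
    (ht : 0 ≤ t) (hu : 0 ≤ u) (i : Fin d → ℤ) :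
    G q (t + u) i ≤ (G q (2 * t) 0) ^ ((1 : ℝ) / 2) * (G q (2 * u) 0) ^ ((1 : ℝ) / 2) := by
  rw [G_semigroup q ht hu]
  refine le_trans (tsum_cauchy_schwarz (G q t) (fun j => G q u (i - j))) ?_
  rw [← tsum_G_sq q hqs ht, ← tsum_G_sq q hqs hu]
  have : ∑' j, G q u (i - j) ^ 2 = ∑' j, G q u j ^ 2 :=
    (Equiv.subLeft i).tsum_eq fun j => G q u j ^ 2
  rw [this]

lemma key_bound (q : (Fin d → ℤ) → ℝ≥0∞) (hq1 : ∑' i, q i = 1)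
    (hqs : ∀ i, q (-i) = q i) {m : ℕ} (hm : 3 ≤ m) {s t : ℝ} (hs : 0 ≤ s) (hst : s ≤ t) :
    ∑' i, G q t i ^ m ≤ G q (2 * s) 0 * G q (2 * (t - s)) 0 := by
  have ht : 0 ≤ t := le_trans hs hst
  have hts : 0 ≤ t - s := sub_nonneg.mpr hst
  set A := G q (2 * s) 0 with hA
  set B := G q (2 * (t - s)) 0 with hB
  set S := A ^ ((1 : ℝ) / 2) * B ^ ((1 : ℝ) / 2) with hS
  have h1 : ∀ i, G q t i ≤ S := by
    intro i
    have := G_le_sqrt q hqs hs hts i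
    rwa [add_sub_cancel] at this
  have h2 : ∑' i, G q t i ^ 2 ≤ S := by
    calc ∑' i, G q t i ^ 2 = ∑' i, G q t i * G q t i := by simp_rw [sq]
    _ ≤ ∑' i, S * G q t i := ENNReal.tsum_le_tsum fun i =>
        mul_le_mul_left (h1 i) _
    _ = S * ∑' i, G q t i := ENNReal.tsum_mul_left
    _ = S := by rw [tsum_G q hq1 ht, mul_one]
  have h3 : ∑' i, G q t i ^ m ≤ ∑' i, G q t i ^ 3 :=
    ENNReal.tsum_le_tsum fun i =>
      pow_le_pow_of_le_one zero_le (G_le_one q hq1 ht i) hm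
  have h4 : ∑' i, G q t i ^ 3 ≤ S * S := by
    calc ∑' i, G q t i ^ 3 = ∑' i, G q t i ^ 2 * G q t i := by
          refine tsum_congr fun i => ?_; ring
    _ ≤ ∑' i, G q t i ^ 2 * S := ENNReal.tsum_le_tsum fun i =>
        mul_le_mul_right (h1 i) _
    _ = (∑' i, G q t i ^ 2) * S := ENNReal.tsum_mul_right
    _ ≤ S * S := mul_le_mul_left h2 _
  have hSS : S * S = A * B := by
    have hx : ∀ x : ℝ≥0∞, x ^ ((1 : ℝ) / 2) * x ^ ((1 : ℝ) / 2) = x := fun x => by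
      rw [← ENNReal.rpow_add_of_nonneg _ _ (by norm_num) (by norm_num)]
      norm_num
    calc S * S = (A ^ ((1 : ℝ) / 2) * A ^ ((1 : ℝ) / 2)) *
        (B ^ ((1 : ℝ) / 2) * B ^ ((1 : ℝ) / 2)) := by rw [hS]; ring
    _ = A * B := by rw [hx A, hx B]
  exact le_trans h3 (le_trans h4 hSS.le)

section Conversion

variable (p : (Fin d → ℤ) → ℝ)

lemma F_ne_top (q : (Fin d → ℤ) → ℝ≥0∞) (hq1 : ∑' i, q i = 1) (n : ℕ) (i : Fin d → ℤ) :
    F q n i ≠ ⊤ := (lt_of_le_of_lt (F_le_one q hq1 n i) ENNReal.one_lt_top).ne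

lemma convPow_eq (hp : ∀ i, 0 ≤ p i)
    (hq1 : ∑' i, ENNReal.ofReal (p i) = 1) (n : ℕ) (i : Fin d → ℤ) :
    convPow p n i = (F (fun j => ENNReal.ofReal (p j)) n i).toReal := by
  set q : (Fin d → ℤ) → ℝ≥0∞ := fun j => ENNReal.ofReal (p j) with hqdef
  induction n generalizing i with
  | zero =>
      show (if i = 0 then (1 : ℝ) else 0) = ((if i = 0 then (1 : ℝ≥0∞) else 0)).toReal
      split <;> simp
  | succ n ih =>
      show ∑' j, p j * convPow p n (i - j) = (∑' j, q j * F q n (i - j)).toReal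
      rw [ENNReal.tsum_toReal_eq fun j =>
        ENNReal.mul_ne_top ENNReal.ofReal_ne_top (F_ne_top q hq1 n _)]
      refine tsum_congr fun j => ?_
      rw [ENNReal.toReal_mul, ih, hqdef, ENNReal.toReal_ofReal (hp j)]

lemma Pker_eq (hp : ∀ i, 0 ≤ p i)
    (hq1 : ∑' i, ENNReal.ofReal (p i) = 1) {t : ℝ} (ht : 0 ≤ t) (i : Fin d → ℤ) :
    Pker p t i = (G (fun j => ENNReal.ofReal (p j)) t i).toReal := by
  set q : (Fin d → ℤ) → ℝ≥0∞ := fun j => ENNReal.ofReal (p j) with hqdef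
  show ∑' n : ℕ, Real.exp (-t) * (t ^ n / (n.factorial : ℝ)) * convPow p n i
      = (∑' n, pc t n * F q n i).toReal
  rw [ENNReal.tsum_toReal_eq fun n =>
    ENNReal.mul_ne_top (pc_ne_top t n) (F_ne_top q hq1 n _)]
  refine tsum_congr fun n => ?_
  rw [ENNReal.toReal_mul, convPow_eq p hp hq1 n i]
  congr 1
  unfold pc
  rw [ENNReal.toReal_ofReal (by positivity)]

lemma ofReal_Pker_eq (hp : ∀ i, 0 ≤ p i)
    (hq1 : ∑' i, ENNReal.ofReal (p i) = 1) {t : ℝ} (ht : 0 ≤ t) (i : Fin d → ℤ) :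
    ENNReal.ofReal (Pker p t i) = G (fun j => ENNReal.ofReal (p j)) t i := by
  rw [Pker_eq p hp hq1 ht i, ENNReal.ofReal_toReal (G_ne_top _ hq1 ht i)]

lemma tsum_G_pow_ne_top (q : (Fin d → ℤ) → ℝ≥0∞) (hq1 : ∑' i, q i = 1)
    {t : ℝ} (ht : 0 ≤ t) {m : ℕ} (hm : m ≠ 0) : (∑' i, G q t i ^ m) ≠ ⊤ := by
  refine ne_top_of_le_ne_top ENNReal.one_ne_top ?_
  calc ∑' i, G q t i ^ m ≤ ∑' i, G q t i :=
        ENNReal.tsum_le_tsum fun i => pow_le_of_le_one zero_le (G_le_one q hq1 ht i) hm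
  _ = 1 := tsum_G q hq1 ht

lemma ofReal_main (hp : ∀ i, 0 ≤ p i)
    (hq1 : ∑' i, ENNReal.ofReal (p i) = 1) {t : ℝ} (ht : 0 ≤ t) {m : ℕ} (hm : m ≠ 0) :
    ENNReal.ofReal (t * ∑' i, Pker p t i ^ m)
      = ENNReal.ofReal t * ∑' i, G (fun j => ENNReal.ofReal (p j)) t i ^ m := by
  set q : (Fin d → ℤ) → ℝ≥0∞ := fun j => ENNReal.ofReal (p j) with hqdef
  have h1 : ∑' i, Pker p t i ^ m = (∑' i, G q t i ^ m).toReal := by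
    rw [ENNReal.tsum_toReal_eq fun i => ENNReal.pow_ne_top (G_ne_top q hq1 ht i)]
    refine tsum_congr fun i => ?_
    rw [Pker_eq p hp hq1 ht i, ← ENNReal.toReal_pow]
  rw [h1, ENNReal.ofReal_mul ht, ENNReal.ofReal_toReal (tsum_G_pow_ne_top q hq1 ht hm)]

end Conversion

lemma measurable_G (q : (Fin d → ℤ) → ℝ≥0∞) (i : Fin d → ℤ) :
    Measurable fun t : ℝ => G q t i := by
  refine Measurable.ennreal_tsum fun n => ?_
  have hc : Continuous fun t : ℝ => Real.exp (-t) * (t ^ n / (n.factorial : ℝ)) :=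
    (Real.continuous_exp.comp continuous_neg).mul ((continuous_pow n).div_const _)
  exact (ENNReal.measurable_ofReal.comp hc.measurable).mul_const _

lemma lintegral_scale_two (f : ℝ → ℝ≥0∞) (hf : Measurable f) :
    ∫⁻ u in Set.Ioi (0:ℝ), f (2 * u)
      = ENNReal.ofReal |(2:ℝ)⁻¹| * ∫⁻ u in Set.Ioi (0:ℝ), f u := by
  have h1 : ∀ u : ℝ, (Set.Ioi (0:ℝ)).indicator (fun u => f (2 * u)) u
      = ((Set.Ioi (0:ℝ)).indicator f) (2 * u) := by
    intro u
    by_cases hu : u ∈ Set.Ioi (0:ℝ)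
    · rw [Set.indicator_of_mem hu, Set.indicator_of_mem
        (by simp only [Set.mem_Ioi] at hu ⊢; linarith)]
    · rw [Set.indicator_of_notMem hu, Set.indicator_of_notMem
        (by simp only [Set.mem_Ioi] at hu ⊢; linarith)]
  calc ∫⁻ u in Set.Ioi (0:ℝ), f (2 * u)
      = ∫⁻ u, (Set.Ioi (0:ℝ)).indicator (fun u => f (2 * u)) u :=
        (lintegral_indicator measurableSet_Ioi (fun u => f (2 * u))).symm
    _ = ∫⁻ u, ((Set.Ioi (0:ℝ)).indicator f) (2 * u) := by simp_rw [h1]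
    _ = ∫⁻ x, (Set.Ioi (0:ℝ)).indicator f x ∂(Measure.map (fun u : ℝ => 2 * u) volume) :=
        (lintegral_map (hf.indicator measurableSet_Ioi) (measurable_const_mul 2)).symm
    _ = ENNReal.ofReal |(2:ℝ)⁻¹| * ∫⁻ u in Set.Ioi (0:ℝ), f u := by
        rw [Real.map_volume_mul_left (two_ne_zero), lintegral_smul_measure,
          lintegral_indicator measurableSet_Ioi f, smul_eq_mul]

lemma lintegral_translate (f : ℝ → ℝ≥0∞) (s : ℝ) :
    ∫⁻ t in Set.Ioi s, f (t - s) = ∫⁻ u in Set.Ioi (0:ℝ), f u := by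
  have h1 : ∀ t : ℝ, (Set.Ioi s).indicator (fun t => f (t - s)) t
      = ((Set.Ioi (0:ℝ)).indicator f) (t + -s) := by
    intro t
    by_cases htm : t ∈ Set.Ioi s
    · rw [Set.indicator_of_mem htm, ← sub_eq_add_neg, Set.indicator_of_mem
        (by simp only [Set.mem_Ioi] at htm ⊢; linarith)]
    · rw [Set.indicator_of_notMem htm, ← sub_eq_add_neg, Set.indicator_of_notMem
        (by simp only [Set.mem_Ioi] at htm ⊢; linarith)]
  calc ∫⁻ t in Set.Ioi s, f (t - s)
      = ∫⁻ t, (Set.Ioi s).indicator (fun t => f (t - s)) t :=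
        (lintegral_indicator measurableSet_Ioi _).symm
    _ = ∫⁻ t, ((Set.Ioi (0:ℝ)).indicator f) (t + -s) := by simp_rw [h1]
    _ = ∫⁻ t, ((Set.Ioi (0:ℝ)).indicator f) t :=
        lintegral_add_right_eq_self _ _
    _ = ∫⁻ u in Set.Ioi (0:ℝ), f u := lintegral_indicator measurableSet_Ioi f

end StrongTransienceAux


open StrongTransienceAux in
/-- Strong transience of the differences random walk of `m ≥ 3` independent copies
of a symmetric transient random walk: if `∫_0^∞ P_t(0) dt < ∞`, then
`∫_0^∞ t ∑_i P_t(i)^m dt < ∞` for every `m ≥ 3`. -/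
theorem strongly_transient_of_transient {d : ℕ} (hd : 1 ≤ d) (p : (Fin d → ℤ) → ℝ)
    (hp_nonneg : ∀ i, 0 ≤ p i) (hp_sum : ∑' i, p i = 1)
    (hp_symm : ∀ i, p (-i) = p i)
    (htrans : ∫⁻ t in Set.Ioi (0 : ℝ), ENNReal.ofReal (Pker p t 0) < ⊤) :
    ∀ m : ℕ, 3 ≤ m →
      ∫⁻ t in Set.Ioi (0 : ℝ),
        ENNReal.ofReal (t * ∑' i : Fin d → ℤ, (Pker p t i) ^ m) < ⊤ := by
  intro m hm
  classical
  set q : (Fin d → ℤ) → ℝ≥0∞ := fun j => ENNReal.ofReal (p j) with hqdef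
  have hsp : Summable p := by
    by_contra h
    rw [tsum_eq_zero_of_not_summable h] at hp_sum
    norm_num at hp_sum
  have hq1 : ∑' i, q i = 1 := by
    rw [hqdef, ← ENNReal.ofReal_tsum_of_nonneg hp_nonneg hsp, hp_sum, ENNReal.ofReal_one]
  have hqs : ∀ i, q (-i) = q i := fun i => by simp only [hqdef, hp_symm i]
  set φ2 : ℝ → ℝ≥0∞ := fun u => G q (2 * u) 0 with hφ2
  have hφ2meas : Measurable φ2 := (measurable_G q 0).comp (measurable_const_mul 2)
  -- finiteness of ∫ φ2 on (0,∞)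
  have hI : ∫⁻ u in Set.Ioi (0:ℝ), G q u 0 < ⊤ := by
    refine lt_of_eq_of_lt ?_ htrans
    refine setLIntegral_congr_fun measurableSet_Ioi ?_
    intro t ht
    exact (ofReal_Pker_eq p hp_nonneg hq1 (le_of_lt ht) 0).symm
  have hI2 : ∫⁻ u in Set.Ioi (0:ℝ), φ2 u < ⊤ := by
    rw [hφ2]
    rw [lintegral_scale_two (fun u => G q u 0) (measurable_G q 0)]
    exact ENNReal.mul_lt_top ENNReal.ofReal_lt_top hI
  set I2 : ℝ≥0∞ := ∫⁻ u in Set.Ioi (0:ℝ), φ2 u with hI2def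
  -- the two-variable function
  set K : Set (ℝ × ℝ) := {x : ℝ × ℝ | 0 < x.1 ∧ x.1 < x.2} with hK
  have hKmeas : MeasurableSet K :=
    (measurableSet_lt measurable_const measurable_fst).inter
      (measurableSet_lt measurable_fst measurable_snd)
  set Φ : ℝ × ℝ → ℝ≥0∞ :=
    K.indicator (fun x => φ2 x.1 * φ2 (x.2 - x.1)) with hΦ
  have hΦmeas : Measurable Φ :=
    ((hφ2meas.comp measurable_fst).mul
      (hφ2meas.comp (measurable_snd.sub measurable_fst))).indicator hKmeas
  -- pointwise bound for t > 0
  have stepA : ∀ t : ℝ, t ∈ Set.Ioi (0:ℝ) →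
      ENNReal.ofReal (t * ∑' i : Fin d → ℤ, (Pker p t i) ^ m)
        ≤ ∫⁻ s, Φ (s, t) := by
    intro t ht
    rw [Set.mem_Ioi] at ht
    rw [ofReal_main p hp_nonneg hq1 ht.le (by omega)]
    have hTle : ∀ s ∈ Set.Ioo (0:ℝ) t,
        (∑' i, G q t i ^ m) ≤ φ2 s * φ2 (t - s) := by
      intro s hs
      exact key_bound q hq1 hqs hm hs.1.le hs.2.le
    calc ENNReal.ofReal t * ∑' i, G q t i ^ m
        = ∫⁻ _ in Set.Ioo (0:ℝ) t, (∑' i, G q t i ^ m) := by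
          rw [setLIntegral_const, Real.volume_Ioo, sub_zero, mul_comm]
      _ ≤ ∫⁻ s in Set.Ioo (0:ℝ) t, φ2 s * φ2 (t - s) :=
          lintegral_mono_ae ((ae_restrict_iff' measurableSet_Ioo).mpr
            (Filter.Eventually.of_forall hTle))
      _ = ∫⁻ s, Φ (s, t) := by
          rw [← lintegral_indicator measurableSet_Ioo]
          refine lintegral_congr fun s => ?_
          by_cases hst : s ∈ Set.Ioo (0:ℝ) t
          · rw [Set.indicator_of_mem hst, hΦ, Set.indicator_of_mem
              (by exact ⟨hst.1, hst.2⟩)]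
          · rw [Set.indicator_of_notMem hst, hΦ, Set.indicator_of_notMem
              (by simp only [hK, Set.mem_setOf_eq]; simp only [Set.mem_Ioo] at hst; tauto)]
  -- inner integral in t
  have stepD : ∀ s : ℝ, ∫⁻ t, Φ (s, t)
      = (Set.Ioi (0:ℝ)).indicator (fun s => φ2 s * I2) s := by
    intro s
    by_cases hs : 0 < s
    · have h1 : ∀ t : ℝ, Φ (s, t)
          = (Set.Ioi s).indicator (fun t => φ2 s * φ2 (t - s)) t := by
        intro t
        by_cases hst : s < t
        · rw [hΦ, Set.indicator_of_mem (by exact ⟨hs, hst⟩),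
            Set.indicator_of_mem (Set.mem_Ioi.mpr hst)]
        · rw [hΦ, Set.indicator_of_notMem (by simp only [hK, Set.mem_setOf_eq]; tauto),
            Set.indicator_of_notMem (by simpa using hst)]
      have hmeas : Measurable fun a : ℝ => φ2 (a - s) :=
        hφ2meas.comp (measurable_id.sub_const s)
      simp_rw [h1]
      rw [lintegral_indicator measurableSet_Ioi,
        lintegral_const_mul (φ2 s) hmeas,
        lintegral_translate φ2 s, Set.indicator_of_mem (Set.mem_Ioi.mpr hs)]
    · have h1 : ∀ t : ℝ, Φ (s, t) = 0 := by
        intro t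
        rw [hΦ, Set.indicator_of_notMem (by simp only [hK, Set.mem_setOf_eq]; tauto)]
      simp_rw [h1]
      rw [lintegral_zero, Set.indicator_of_notMem (by simpa using hs)]
  calc ∫⁻ t in Set.Ioi (0 : ℝ),
        ENNReal.ofReal (t * ∑' i : Fin d → ℤ, (Pker p t i) ^ m)
      ≤ ∫⁻ t in Set.Ioi (0:ℝ), ∫⁻ s, Φ (s, t) :=
        lintegral_mono_ae ((ae_restrict_iff' measurableSet_Ioi).mpr
          (Filter.Eventually.of_forall stepA))
    _ ≤ ∫⁻ t, ∫⁻ s, Φ (s, t) := setLIntegral_le_lintegral _ _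
    _ = ∫⁻ s, ∫⁻ t, Φ (s, t) := by
        have hu : AEMeasurable (Function.uncurry fun t s => Φ (s, t))
            ((volume : Measure ℝ).prod (volume : Measure ℝ)) := by
          have : (Function.uncurry fun t s => Φ (s, t)) = Φ ∘ Prod.swap := rfl
          rw [this]
          exact (hΦmeas.comp measurable_swap).aemeasurable
        exact lintegral_lintegral_swap hu
    _ = ∫⁻ s, (Set.Ioi (0:ℝ)).indicator (fun s => φ2 s * I2) s :=
        lintegral_congr stepD
    _ = ∫⁻ s in Set.Ioi (0:ℝ), φ2 s * I2 :=
        lintegral_indicator measurableSet_Ioi _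
    _ = I2 * I2 := by rw [lintegral_mul_const _ hφ2meas]
    _ < ⊤ := ENNReal.mul_lt_top hI2 hI2
end

section
/- Let f : [0,∞) → [0,∞) be nonincreasing (hence measurable) and let k be a positive integer. Then ∫_0^∞ t · f(t)^k · f(2t) dt ≤ (1/2) · (∫_0^∞ f(t)^k dt) · (∫_0^∞ f(s) ds), where all integrals are taken in [0,∞] (Lebesgue integrals of nonnegative functions). -/
open MeasureTheory
open scoped ENNReal

/-- If `f : [0,∞) → [0,∞]` is nonincreasing and `k ≥ 1`, then
`∫_0^∞ t f(t)^k f(2t) dt ≤ (1/2) (∫_0^∞ f(t)^k dt) (∫_0^∞ f(s) ds)`,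
all integrals taken in `[0,∞]`. -/
theorem lintegral_mul_antitone_bound (f : ℝ → ℝ≥0∞)
    (hf : AntitoneOn f (Set.Ici (0 : ℝ))) (k : ℕ) (hk : 1 ≤ k) :
    ∫⁻ t in Set.Ioi (0 : ℝ), ENNReal.ofReal t * (f t) ^ k * f (2 * t)
      ≤ (1 / 2) * (∫⁻ t in Set.Ioi (0 : ℝ), (f t) ^ k) *
          ∫⁻ s in Set.Ioi (0 : ℝ), f s := by
  set g : ℝ → ℝ≥0∞ := fun t => f (max t 0) with hgdef
  have hganti : Antitone g := fun a b hab =>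
    hf (Set.mem_Ici.mpr (le_max_right _ _)) (Set.mem_Ici.mpr (le_max_right _ _)) (max_le_max hab le_rfl)
  have hgm : Measurable g := hganti.measurable
  have hEq : ∀ t ∈ Set.Ioi (0 : ℝ), f t = g t := fun t ht => by
    simp [hgdef, max_eq_left ht.out.le]
  have e1 : ∫⁻ t in Set.Ioi (0 : ℝ), ENNReal.ofReal t * (f t) ^ k * f (2 * t)
      = ∫⁻ t in Set.Ioi (0 : ℝ), ENNReal.ofReal t * (g t) ^ k * g (2 * t) := by
    apply setLIntegral_congr_fun measurableSet_Ioi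
    intro t ht; dsimp only
    rw [hEq t ht, hEq (2 * t) (by simp at ht ⊢; linarith)]
  have e2 : ∫⁻ t in Set.Ioi (0 : ℝ), (f t) ^ k
      = ∫⁻ t in Set.Ioi (0 : ℝ), (g t) ^ k := by
    apply setLIntegral_congr_fun measurableSet_Ioi
    intro t ht; dsimp only
    rw [hEq t ht]
  have e3 : ∫⁻ s in Set.Ioi (0 : ℝ), f s = ∫⁻ s in Set.Ioi (0 : ℝ), g s := by
    apply setLIntegral_congr_fun measurableSet_Ioi
    intro t ht
    rw [hEq t ht]
  rw [e1, e2, e3]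
  set I : ℝ≥0∞ := ∫⁻ s in Set.Ioi (0 : ℝ), g s with hI
  have key : ∀ t ∈ Set.Ioi (0 : ℝ), ENNReal.ofReal (2 * t) * g (2 * t) ≤ I := by
    intro t ht
    have ht' : (0 : ℝ) < 2 * t := by simp at ht; linarith
    calc ENNReal.ofReal (2 * t) * g (2 * t)
        = ∫⁻ _ in Set.Ioo (0 : ℝ) (2 * t), g (2 * t) := by
          rw [setLIntegral_const, Real.volume_Ioo, mul_comm]
          norm_num
      _ ≤ ∫⁻ s in Set.Ioo (0 : ℝ) (2 * t), g s := by
          apply setLIntegral_mono hgm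
          intro s hs
          exact hganti hs.2.le
      _ ≤ I := lintegral_mono_set Set.Ioo_subset_Ioi_self
  have ptwise : ∀ t ∈ Set.Ioi (0 : ℝ),
      ENNReal.ofReal t * (g t) ^ k * g (2 * t) ≤ (g t) ^ k * ((1 / 2) * I) := by
    intro t ht
    have h2 : ENNReal.ofReal t * g (2 * t) ≤ (1 / 2) * I := by
      have : ENNReal.ofReal (2 * t) = 2 * ENNReal.ofReal t := by
        rw [ENNReal.ofReal_mul (by norm_num)]; norm_num
      have hle := key t ht
      rw [this] at hle
      calc ENNReal.ofReal t * g (2 * t)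
          = (1 / 2) * (2 * ENNReal.ofReal t * g (2 * t)) := by
            rw [mul_assoc, ← mul_assoc (1/2 : ℝ≥0∞), one_div,
              ENNReal.inv_mul_cancel two_ne_zero ENNReal.ofNat_ne_top, one_mul]
        _ ≤ (1 / 2) * I := by exact mul_le_mul_right (by rw [mul_assoc] at hle ⊢; exact hle) _
    calc ENNReal.ofReal t * (g t) ^ k * g (2 * t)
        = (g t) ^ k * (ENNReal.ofReal t * g (2 * t)) := by ring
      _ ≤ (g t) ^ k * ((1 / 2) * I) := mul_le_mul_right h2 _
  calc ∫⁻ t in Set.Ioi (0 : ℝ), ENNReal.ofReal t * (g t) ^ k * g (2 * t)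
      ≤ ∫⁻ t in Set.Ioi (0 : ℝ), (g t) ^ k * ((1 / 2) * I) :=
        setLIntegral_mono (by fun_prop) ptwise
    _ = (∫⁻ t in Set.Ioi (0 : ℝ), (g t) ^ k) * ((1 / 2) * I) :=
        lintegral_mul_const _ (hgm.pow_const k)
    _ = (1 / 2) * (∫⁻ t in Set.Ioi (0 : ℝ), (g t) ^ k) * I := by ring
end

section
/- Let H be a real Hilbert space and let a : H → H be a bounded self-adjoint linear operator with operator norm ‖a‖ ≤ 1. If μ ∈ H is such that the series Σ_{n=0}^∞ ⟨μ, aⁿμ⟩ converges to a real number L (i.e. the partial sums converge), then L ≥ 0. (This yields the positivity of the quadratic form of the Green operator G = Σ_{n≥0} aⁿ of a symmetric transition kernel.) -/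
open Filter

/-- If `a` is a bounded self-adjoint operator on a real Hilbert space with
`‖a‖ ≤ 1` and the series `∑_n ⟨μ, aⁿμ⟩` converges to `L`, then `L ≥ 0`. -/
theorem green_quadratic_form_nonneg {H : Type*} [NormedAddCommGroup H]
    [InnerProductSpace ℝ H] [CompleteSpace H]
    (a : H →L[ℝ] H) (ha : ∀ x y : H, (inner ℝ (a x) y : ℝ) = inner ℝ x (a y))
    (hnorm : ‖a‖ ≤ 1) (μ : H) (L : ℝ)
    (hL : Tendsto (fun N : ℕ => ∑ n ∈ Finset.range N, (inner ℝ μ ((a ^ n) μ) : ℝ))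
      atTop (nhds L)) :
    0 ≤ L := by
  -- iterated self-adjointness
  have hpow : ∀ (n : ℕ) (x y : H), (inner ℝ ((a ^ n) x) y : ℝ) = inner ℝ x ((a ^ n) y) := by
    intro n
    induction n with
    | zero => intro x y; simp
    | succ k ih =>
      intro x y
      have h1 : (a ^ (k + 1)) x = (a ^ k) (a x) := by
        rw [pow_succ, ContinuousLinearMap.mul_apply]
      have h2 : (a ^ (k + 1)) y = a ((a ^ k) y) := by
        rw [pow_succ', ContinuousLinearMap.mul_apply]
      rw [h1, h2, ih, ha]
  -- even partial sums are nonneg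
  have key : ∀ N : ℕ, 0 ≤ ∑ n ∈ Finset.range (2 * N), (inner ℝ μ ((a ^ n) μ) : ℝ) := by
    intro N
    induction N with
    | zero => simp
    | succ k ih =>
      have hrange : 2 * (k + 1) = (2 * k + 1) + 1 := by ring
      rw [hrange, Finset.sum_range_succ, Finset.sum_range_succ]
      set v := (a ^ k) μ with hv
      have e1 : (inner ℝ μ ((a ^ (2 * k)) μ) : ℝ) = inner ℝ v v := by
        have : (a ^ (2 * k)) μ = (a ^ k) ((a ^ k) μ) := by
          rw [two_mul, pow_add]; rfl
        rw [this, ← hpow]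
      have e2 : (inner ℝ μ ((a ^ (2 * k + 1)) μ) : ℝ) = inner ℝ v (a v) := by
        have : (a ^ (2 * k + 1)) μ = (a ^ k) (a ((a ^ k) μ)) := by
          rw [show 2 * k + 1 = k + 1 + k from by ring, pow_add, pow_add, pow_one]
          simp [ContinuousLinearMap.mul_apply]
        rw [this, ← hpow]
      have hav : ‖a v‖ ≤ ‖v‖ := by
        calc ‖a v‖ ≤ ‖a‖ * ‖v‖ := a.le_opNorm v
        _ ≤ 1 * ‖v‖ := by
            apply mul_le_mul_of_nonneg_right hnorm (norm_nonneg v)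
        _ = ‖v‖ := one_mul _
      have hcs : (-(‖v‖ * ‖v‖) : ℝ) ≤ inner ℝ v (a v) := by
        have h1 := abs_real_inner_le_norm v (a v)
        have h2 : ‖v‖ * ‖a v‖ ≤ ‖v‖ * ‖v‖ :=
          mul_le_mul_of_nonneg_left hav (norm_nonneg v)
        nlinarith [neg_abs_le (inner ℝ v (a v) : ℝ)]
      have hvv : (inner ℝ v v : ℝ) = ‖v‖ * ‖v‖ := real_inner_self_eq_norm_mul_norm v
      rw [e1, e2]
      linarith
  have h2 : Tendsto (fun N : ℕ => ∑ n ∈ Finset.range (2 * N), (inner ℝ μ ((a ^ n) μ) : ℝ))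
      atTop (nhds L) :=
    hL.comp (tendsto_atTop_mono (f := id) (fun n => by simp; omega) tendsto_id)
  exact le_of_tendsto_of_tendsto' tendsto_const_nhds h2 key
end

section
/- Let S be a nonempty countable set and let Q be a bounded self-adjoint linear operator on the real Hilbert space ℓ²(S) whose matrix entries are nonnegative, i.e. ⟨δ_x, Q δ_y⟩ ≥ 0 for all x, y ∈ S. Assume that for all x, y ∈ S the entries ⟨δ_x, Qⁿ δ_y⟩ are strictly positive for all sufficiently large n and that lim_{n→∞} (1/n) · log ⟨δ_x, Qⁿ δ_y⟩ = 0. Then sup{⟨ν, Q ν⟩ : ν ∈ ℓ²(S), ‖ν‖ = 1} = 1; that is, the top of the spectrum of Q equals 1. -/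
open Filter

section Aux

variable {S : Type*} [DecidableEq S]

local notation "H" => lp (fun _ : S => ℝ) 2

/-- basis vectors -/
noncomputable def TOSdelta (x : S) : lp (fun _ : S => ℝ) 2 := lp.single 2 x 1

lemma TOS_norm_delta (x : S) : ‖(TOSdelta x : H)‖ = 1 := by
  have := lp.norm_single (p := 2) (E := fun _ : S => ℝ) (by norm_num) x (1:ℝ)
  simpa [TOSdelta] using this

lemma TOS_inner_delta_left (x : S) (f : H) : (inner ℝ (TOSdelta x) f : ℝ) = f x := by
  rw [TOSdelta, lp.inner_single_left]
  simp [RCLike.inner_apply]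

lemma TOS_single_eq_smul (x : S) (c : ℝ) :
    (lp.single 2 x c : H) = c • TOSdelta x := by
  have := lp.single_smul (E := fun _ : S => ℝ) 2 x c (1:ℝ)
  simpa [TOSdelta] using this

lemma TOS_sa_pow (Q : H →L[ℝ] H)
    (hQ_sa : ∀ μ ν : H, (inner ℝ (Q μ) ν : ℝ) = inner ℝ μ (Q ν)) (n : ℕ) :
    ∀ μ ν : H, (inner ℝ ((Q ^ n) μ) ν : ℝ) = inner ℝ μ ((Q ^ n) ν) := by
  induction n with
  | zero => intro μ ν; simp
  | succ n ih =>
    intro μ ν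
    have h1 : (Q ^ (n+1)) μ = (Q ^ n) (Q μ) := by
      rw [pow_succ, ContinuousLinearMap.mul_apply]
    have h2 : (Q ^ (n+1)) ν = Q ((Q ^ n) ν) := by
      rw [pow_succ', ContinuousLinearMap.mul_apply]
    rw [h1, h2, ih (Q μ) ν, ← hQ_sa, real_inner_comm]

lemma TOS_iter_bound (Q : H →L[ℝ] H)
    (hQ_sa : ∀ μ ν : H, (inner ℝ (Q μ) ν : ℝ) = inner ℝ μ (Q ν))
    (g : H) (hg : ‖g‖ = 1) (hd : 0 ≤ (inner ℝ g (Q g) : ℝ)) (m : ℕ) :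
    (inner ℝ g (Q g) : ℝ) ^ (2 ^ m) ≤ (inner ℝ g ((Q ^ (2 ^ m)) g) : ℝ) := by
  induction m with
  | zero => simp
  | succ m ih =>
    have hNN : (Q ^ (2 ^ (m+1))) g = (Q ^ (2 ^ m)) ((Q ^ (2 ^ m)) g) := by
      rw [pow_succ, pow_mul, sq, ContinuousLinearMap.mul_apply]
    have hpos : (0:ℝ) ≤ (inner ℝ g (Q g) : ℝ) ^ (2 ^ m) := pow_nonneg hd _
    have hsq : ((inner ℝ g (Q g) : ℝ) ^ (2 ^ m)) ^ 2 ≤ ((inner ℝ g ((Q ^ (2 ^ m)) g) : ℝ)) ^ 2 := by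
      have := mul_self_le_mul_self hpos ih
      simpa [sq] using this
    have hcs : ((inner ℝ g ((Q ^ (2 ^ m)) g) : ℝ)) ^ 2 ≤ ‖(Q ^ (2 ^ m)) g‖ ^ 2 := by
      have h1 : |(inner ℝ g ((Q ^ (2 ^ m)) g) : ℝ)| ≤ ‖g‖ * ‖(Q ^ (2 ^ m)) g‖ :=
        abs_real_inner_le_norm _ _
      have h2 : ((inner ℝ g ((Q ^ (2 ^ m)) g) : ℝ)) ^ 2 ≤ (‖g‖ * ‖(Q ^ (2 ^ m)) g‖) ^ 2 := by
        rw [← sq_abs]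
        exact pow_le_pow_left₀ (abs_nonneg _) h1 2
      simpa [hg] using h2
    have hnorm : ‖(Q ^ (2 ^ m)) g‖ ^ 2 = (inner ℝ g ((Q ^ (2 ^ (m+1))) g) : ℝ) := by
      rw [hNN, ← TOS_sa_pow Q hQ_sa (2 ^ m) g ((Q ^ (2 ^ m)) g), real_inner_self_eq_norm_sq]
    calc (inner ℝ g (Q g) : ℝ) ^ (2 ^ (m+1))
        = ((inner ℝ g (Q g) : ℝ) ^ (2 ^ m)) ^ 2 := by
          rw [← pow_mul, pow_succ]
      _ ≤ ((inner ℝ g ((Q ^ (2 ^ m)) g) : ℝ)) ^ 2 := hsq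
      _ ≤ ‖(Q ^ (2 ^ m)) g‖ ^ 2 := hcs
      _ = _ := hnorm

lemma TOS_quad_expand (A : H →L[ℝ] H) (F : Finset S) (c : S → ℝ) :
    (inner ℝ (∑ x ∈ F, c x • TOSdelta x) (A (∑ y ∈ F, c y • TOSdelta y)) : ℝ)
      = ∑ x ∈ F, ∑ y ∈ F, c x * c y * (inner ℝ (TOSdelta x) (A (TOSdelta y)) : ℝ) := by
  rw [map_sum, sum_inner]
  refine Finset.sum_congr rfl fun x _ => ?_
  rw [real_inner_smul_left, inner_sum, Finset.mul_sum]
  refine Finset.sum_congr rfl fun y _ => ?_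
  rw [map_smul, real_inner_smul_right]
  ring

lemma TOS_norm_sq_sum (F : Finset S) (c : S → ℝ) :
    ‖(∑ x ∈ F, c x • TOSdelta x : H)‖ ^ 2 = ∑ x ∈ F, (c x) ^ 2 := by
  rw [← real_inner_self_eq_norm_sq, sum_inner]
  refine Finset.sum_congr rfl fun x hx => ?_
  rw [real_inner_smul_left, inner_sum]
  have : ∀ y ∈ F, (inner ℝ (TOSdelta x : H) (c y • TOSdelta y) : ℝ)
      = if x = y then c y else 0 := by
    intro y _
    rw [real_inner_smul_right, TOS_inner_delta_left, TOSdelta, lp.single_apply]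
    by_cases h : x = y
    · subst h; simp
    · simp [h, Ne.symm h]
  rw [Finset.sum_congr rfl this, Finset.sum_ite_eq F x (fun y => c y), if_pos hx]
  ring

end Aux

lemma TOS_le_one_of_exp {a : ℝ} (h : ∀ ε : ℝ, 0 < ε → a ≤ Real.exp ε) : a ≤ 1 := by
  by_contra hc
  push_neg at hc
  have hε : 0 < Real.log a / 2 := by
    have := Real.log_pos hc
    linarith
  have h1 := h _ hε
  have h2 : Real.exp (Real.log a / 2) < Real.exp (Real.log a) :=
    Real.exp_lt_exp.mpr (by linarith [Real.log_pos hc])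
  rw [Real.exp_log (by linarith : (0:ℝ) < a)] at h2
  linarith

lemma TOS_one_le_of_exp {a : ℝ} (h : ∀ ε : ℝ, 0 < ε → Real.exp (-ε) ≤ a) : 1 ≤ a := by
  by_contra hc
  push_neg at hc
  have ha : 0 < a := lt_of_lt_of_le (Real.exp_pos _) (h 1 one_pos)
  have hε : 0 < -(Real.log a) / 2 := by
    have := Real.log_neg ha hc
    linarith
  have h1 := h _ hε
  have h2 : Real.exp (Real.log a) < Real.exp (-(-(Real.log a) / 2)) :=
    Real.exp_lt_exp.mpr (by linarith [Real.log_neg ha hc])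
  rw [Real.exp_log ha] at h2
  linarith

lemma TOS_pow2_bound {a b K : ℝ} (ha : 0 ≤ a) (hb : 0 < b)
    (h : ∀ᶠ m : ℕ in atTop, a ^ (2 ^ m) ≤ K * b ^ (2 ^ m)) : a ≤ b := by
  by_contra hc
  push_neg at hc
  have hr : 1 < a / b := (one_lt_div hb).mpr hc
  have htend : Tendsto (fun m : ℕ => (a / b) ^ (2 ^ m)) atTop atTop := by
    have h1 : Tendsto (fun n : ℕ => (a / b) ^ n) atTop atTop :=
      tendsto_pow_atTop_atTop_of_one_lt hr
    have h2 : Tendsto (fun m : ℕ => 2 ^ m) atTop atTop :=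
      tendsto_pow_atTop_atTop_of_one_lt one_lt_two
    exact h1.comp h2
  have hev : ∀ᶠ m : ℕ in atTop, K < (a / b) ^ (2 ^ m) :=
    htend.eventually_gt_atTop K
  obtain ⟨m, hm1, hm2⟩ := (h.and hev).exists
  have hbpow : (0:ℝ) < b ^ (2 ^ m) := pow_pos hb _
  have heq : a ^ (2 ^ m) = (a / b) ^ (2 ^ m) * b ^ (2 ^ m) := by
    rw [div_pow, div_mul_cancel₀]
    exact ne_of_gt hbpow
  rw [heq] at hm1
  have := (mul_le_mul_iff_of_pos_right hbpow).mp hm1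
  linarith

section Aux2

variable {S : Type*} [DecidableEq S]

local notation "H" => lp (fun _ : S => ℝ) 2

lemma TOS_entry_upper (Q : H →L[ℝ] H) (x y : S)
    (hp : ∀ᶠ n : ℕ in atTop, 0 < (inner ℝ (TOSdelta x) ((Q ^ n) (TOSdelta y)) : ℝ))
    (hg : Tendsto (fun n : ℕ => (1 / (n : ℝ)) *
        Real.log (inner ℝ (TOSdelta x) ((Q ^ n) (TOSdelta y)) : ℝ)) atTop (nhds 0))
    {ε : ℝ} (hε : 0 < ε) :
    ∀ᶠ n : ℕ in atTop,
      (inner ℝ (TOSdelta x) ((Q ^ n) (TOSdelta y)) : ℝ) ≤ Real.exp (ε * n) := by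
  have h1 := hg.eventually_lt_const hε
  filter_upwards [h1, hp, eventually_gt_atTop 0] with n hn hpn hn0
  set E := (inner ℝ (TOSdelta x) ((Q ^ n) (TOSdelta y)) : ℝ)
  have hnR : (0:ℝ) < (n:ℝ) := by exact_mod_cast hn0
  have hlog : Real.log E < ε * n := by
    have := (mul_lt_mul_iff_of_pos_right hnR).mpr hn
    rw [one_div, inv_mul_eq_div, div_mul_cancel₀ _ (ne_of_gt hnR)] at this
    linarith [this]
  calc E = Real.exp (Real.log E) := (Real.exp_log hpn).symm
    _ ≤ Real.exp (ε * n) := Real.exp_le_exp.mpr (le_of_lt hlog)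

lemma TOS_entry_lower (Q : H →L[ℝ] H) (x y : S)
    (hp : ∀ᶠ n : ℕ in atTop, 0 < (inner ℝ (TOSdelta x) ((Q ^ n) (TOSdelta y)) : ℝ))
    (hg : Tendsto (fun n : ℕ => (1 / (n : ℝ)) *
        Real.log (inner ℝ (TOSdelta x) ((Q ^ n) (TOSdelta y)) : ℝ)) atTop (nhds 0))
    {ε : ℝ} (hε : 0 < ε) :
    ∀ᶠ n : ℕ in atTop,
      Real.exp (-(ε * n)) ≤ (inner ℝ (TOSdelta x) ((Q ^ n) (TOSdelta y)) : ℝ) := by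
  have h1 := hg.eventually_const_lt (neg_lt_zero.mpr hε)
  filter_upwards [h1, hp, eventually_gt_atTop 0] with n hn hpn hn0
  set E := (inner ℝ (TOSdelta x) ((Q ^ n) (TOSdelta y)) : ℝ)
  have hnR : (0:ℝ) < (n:ℝ) := by exact_mod_cast hn0
  have hlog : -(ε * n) < Real.log E := by
    have := (mul_lt_mul_iff_of_pos_right hnR).mpr hn
    rw [one_div, inv_mul_eq_div, div_mul_cancel₀ _ (ne_of_gt hnR)] at this
    nlinarith [this]
  calc Real.exp (-(ε * n)) ≤ Real.exp (Real.log E) := Real.exp_le_exp.mpr (le_of_lt hlog)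
    _ = E := Real.exp_log hpn

lemma TOS_core (Q : H →L[ℝ] H)
    (hQ_sa : ∀ μ ν : H, (inner ℝ (Q μ) ν : ℝ) = inner ℝ μ (Q ν))
    (h_nonneg : ∀ x y : S, 0 ≤ (inner ℝ (TOSdelta x) (Q (TOSdelta y)) : ℝ))
    (h_pos : ∀ x y : S, ∀ᶠ n : ℕ in atTop,
      0 < (inner ℝ (TOSdelta x) ((Q ^ n) (TOSdelta y)) : ℝ))
    (h_growth : ∀ x y : S, Tendsto (fun n : ℕ => (1 / (n : ℝ)) *
        Real.log (inner ℝ (TOSdelta x) ((Q ^ n) (TOSdelta y)) : ℝ)) atTop (nhds 0))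
    (F : Finset S) (b : S → ℝ) (hb : ∀ x, 0 ≤ b x)
    (hgnorm : ‖(∑ x ∈ F, b x • TOSdelta x : H)‖ = 1) :
    (inner ℝ (∑ x ∈ F, b x • TOSdelta x)
      (Q (∑ x ∈ F, b x • TOSdelta x)) : ℝ) ≤ 1 := by
  set g : H := ∑ x ∈ F, b x • TOSdelta x with hgdef
  set d : ℝ := (inner ℝ g (Q g) : ℝ) with hddef
  have hd0 : 0 ≤ d := by
    rw [hddef, hgdef, TOS_quad_expand]
    refine Finset.sum_nonneg fun x _ => Finset.sum_nonneg fun y _ => ?_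
    exact mul_nonneg (mul_nonneg (hb x) (hb y)) (h_nonneg x y)
  refine TOS_le_one_of_exp fun ε hε => ?_
  set K : ℝ := ∑ x ∈ F, ∑ y ∈ F, b x * b y with hKdef
  -- eventual bound over all pairs in F
  have hev : ∀ᶠ n : ℕ in atTop, ∀ x ∈ F, ∀ y ∈ F,
      (inner ℝ (TOSdelta x) ((Q ^ n) (TOSdelta y)) : ℝ) ≤ Real.exp (ε * n) := by
    rw [eventually_all_finset]
    intro x _
    rw [eventually_all_finset]
    intro y _
    exact TOS_entry_upper Q x y (h_pos x y) (h_growth x y) hε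
  have h2m : Tendsto (fun m : ℕ => 2 ^ m) atTop atTop :=
    tendsto_pow_atTop_atTop_of_one_lt one_lt_two
  have hevm : ∀ᶠ m : ℕ in atTop, d ^ (2 ^ m) ≤ K * Real.exp ε ^ (2 ^ m) := by
    filter_upwards [h2m.eventually hev] with m hm
    have hib := TOS_iter_bound Q hQ_sa g hgnorm hd0 m
    have hexp : (inner ℝ g ((Q ^ (2 ^ m)) g) : ℝ)
        = ∑ x ∈ F, ∑ y ∈ F, b x * b y * (inner ℝ (TOSdelta x) ((Q ^ (2 ^ m)) (TOSdelta y)) : ℝ) := by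
      rw [hgdef]; exact TOS_quad_expand (Q ^ (2 ^ m)) F b
    have hsum : ∑ x ∈ F, ∑ y ∈ F, b x * b y *
          (inner ℝ (TOSdelta x) ((Q ^ (2 ^ m)) (TOSdelta y)) : ℝ)
        ≤ ∑ x ∈ F, ∑ y ∈ F, b x * b y * Real.exp (ε * (2 ^ m : ℕ)) := by
      refine Finset.sum_le_sum fun x hx => Finset.sum_le_sum fun y hy => ?_
      exact mul_le_mul_of_nonneg_left (hm x hx y hy) (mul_nonneg (hb x) (hb y))
    have hKmul : ∑ x ∈ F, ∑ y ∈ F, b x * b y * Real.exp (ε * (2 ^ m : ℕ))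
        = K * Real.exp ε ^ (2 ^ m) := by
      rw [hKdef, Finset.sum_mul]
      refine Finset.sum_congr rfl fun x _ => ?_
      rw [Finset.sum_mul]
      refine Finset.sum_congr rfl fun y _ => ?_
      rw [mul_comm ε _, Real.exp_nat_mul]
    calc d ^ (2 ^ m) ≤ (inner ℝ g ((Q ^ (2 ^ m)) g) : ℝ) := hib
      _ ≤ K * Real.exp ε ^ (2 ^ m) := by rw [hexp] at *; rw [← hKmul] at *; exact hsum
  exact TOS_pow2_bound hd0 (Real.exp_pos ε) hevm

end Aux2

section Aux3

variable {S : Type*} [DecidableEq S]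

local notation "H" => lp (fun _ : S => ℝ) 2

-- comparison with absolute-value coefficients, general bilinear comparison
lemma TOS_abs_compare (Q : H →L[ℝ] H)
    (h_nonneg : ∀ x y : S, 0 ≤ (inner ℝ (TOSdelta x) (Q (TOSdelta y)) : ℝ))
    (F : Finset S) (c : S → ℝ) :
    |(inner ℝ (∑ x ∈ F, c x • TOSdelta x) (Q (∑ x ∈ F, c x • TOSdelta x)) : ℝ)|
      ≤ (inner ℝ (∑ x ∈ F, |c x| • TOSdelta x)
          (Q (∑ x ∈ F, (|c ·|) x • TOSdelta x)) : ℝ) := by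
  rw [TOS_quad_expand, TOS_quad_expand]
  calc |∑ x ∈ F, ∑ y ∈ F, c x * c y * (inner ℝ (TOSdelta x) (Q (TOSdelta y)) : ℝ)|
      ≤ ∑ x ∈ F, |∑ y ∈ F, c x * c y * (inner ℝ (TOSdelta x) (Q (TOSdelta y)) : ℝ)| :=
        Finset.abs_sum_le_sum_abs _ _
    _ ≤ ∑ x ∈ F, ∑ y ∈ F, |c x * c y * (inner ℝ (TOSdelta x) (Q (TOSdelta y)) : ℝ)| :=
        Finset.sum_le_sum fun x _ => Finset.abs_sum_le_sum_abs _ _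
    _ ≤ ∑ x ∈ F, ∑ y ∈ F, |c x| * |c y| * (inner ℝ (TOSdelta x) (Q (TOSdelta y)) : ℝ) := by
        refine Finset.sum_le_sum fun x _ => Finset.sum_le_sum fun y _ => ?_
        rw [abs_mul, abs_mul, abs_of_nonneg (h_nonneg x y)]
    _ = _ := rfl

lemma TOS_norm_abs_eq (F : Finset S) (c : S → ℝ) :
    ‖(∑ x ∈ F, |c x| • TOSdelta x : H)‖ = ‖(∑ x ∈ F, c x • TOSdelta x : H)‖ := by
  have h1 := TOS_norm_sq_sum F (fun x => |c x|)
  have h2 := TOS_norm_sq_sum F c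
  have : ‖(∑ x ∈ F, |c x| • TOSdelta x : H)‖ ^ 2 = ‖(∑ x ∈ F, c x • TOSdelta x : H)‖ ^ 2 := by
    rw [h1, h2]
    exact Finset.sum_congr rfl fun x _ => sq_abs (c x)
  have := congrArg Real.sqrt this
  rwa [Real.sqrt_sq (norm_nonneg _), Real.sqrt_sq (norm_nonneg _)] at this

-- key finite-dimensional bound
lemma TOS_fin_bound (Q : H →L[ℝ] H)
    (hQ_sa : ∀ μ ν : H, (inner ℝ (Q μ) ν : ℝ) = inner ℝ μ (Q ν))
    (h_nonneg : ∀ x y : S, 0 ≤ (inner ℝ (TOSdelta x) (Q (TOSdelta y)) : ℝ))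
    (h_pos : ∀ x y : S, ∀ᶠ n : ℕ in atTop,
      0 < (inner ℝ (TOSdelta x) ((Q ^ n) (TOSdelta y)) : ℝ))
    (h_growth : ∀ x y : S, Tendsto (fun n : ℕ => (1 / (n : ℝ)) *
        Real.log (inner ℝ (TOSdelta x) ((Q ^ n) (TOSdelta y)) : ℝ)) atTop (nhds 0))
    (F : Finset S) (c : S → ℝ) :
    (inner ℝ (∑ x ∈ F, c x • TOSdelta x) (Q (∑ x ∈ F, c x • TOSdelta x)) : ℝ)
      ≤ ‖(∑ x ∈ F, c x • TOSdelta x : H)‖ ^ 2 := by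
  set f : H := ∑ x ∈ F, c x • TOSdelta x with hfdef
  set g : H := ∑ x ∈ F, |c x| • TOSdelta x with hgdef
  have hng : ‖g‖ = ‖f‖ := TOS_norm_abs_eq F c
  have hcomp : |(inner ℝ f (Q f) : ℝ)| ≤ (inner ℝ g (Q g) : ℝ) := TOS_abs_compare Q h_nonneg F c
  by_cases hz : ‖f‖ = 0
  · have hgz : g = 0 := by rw [← norm_eq_zero, hng]; exact hz
    have : (inner ℝ g (Q g) : ℝ) = 0 := by rw [hgz]; simp
    rw [this] at hcomp
    calc (inner ℝ f (Q f) : ℝ) ≤ |(inner ℝ f (Q f) : ℝ)| := le_abs_self _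
      _ ≤ 0 := hcomp
      _ ≤ ‖f‖ ^ 2 := sq_nonneg _
  · have hfpos : 0 < ‖f‖ := lt_of_le_of_ne (norm_nonneg _) (Ne.symm hz)
    set t : ℝ := ‖f‖ with htdef
    have hgu : (∑ x ∈ F, (t⁻¹ * |c x|) • TOSdelta x : H) = t⁻¹ • g := by
      rw [hgdef, Finset.smul_sum]
      exact Finset.sum_congr rfl fun x _ => (smul_smul _ _ _).symm
    have hunorm : ‖(∑ x ∈ F, (t⁻¹ * |c x|) • TOSdelta x : H)‖ = 1 := by
      rw [hgu, norm_smul, hng, norm_inv, Real.norm_eq_abs, abs_of_pos hfpos,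
        inv_mul_cancel₀ (ne_of_gt hfpos)]
    have hcore := TOS_core Q hQ_sa h_nonneg h_pos h_growth F (fun x => t⁻¹ * |c x|)
      (fun x => mul_nonneg (inv_nonneg.mpr (le_of_lt hfpos)) (abs_nonneg _)) hunorm
    rw [hgu] at hcore
    have hsc : (inner ℝ (t⁻¹ • g) (Q (t⁻¹ • g)) : ℝ) = t⁻¹ ^ 2 * (inner ℝ g (Q g) : ℝ) := by
      rw [map_smul, real_inner_smul_left, real_inner_smul_right]
      ring
    rw [hsc] at hcore
    have hgle : (inner ℝ g (Q g) : ℝ) ≤ t ^ 2 := by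
      have ht2 : (0:ℝ) < t ^ 2 := pow_pos hfpos 2
      have := (mul_le_mul_iff_of_pos_right ht2).mpr hcore
      rw [one_mul] at this
      calc (inner ℝ g (Q g) : ℝ) = t⁻¹ ^ 2 * (inner ℝ g (Q g) : ℝ) * t ^ 2 := by
            field_simp
        _ ≤ t ^ 2 := by rw [mul_comm] at this ⊢; linarith [this]
    calc (inner ℝ f (Q f) : ℝ) ≤ |(inner ℝ f (Q f) : ℝ)| := le_abs_self _
      _ ≤ (inner ℝ g (Q g) : ℝ) := hcomp
      _ ≤ t ^ 2 := hgle

-- approximation by finite sums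
lemma TOS_approx (w : H) {ε : ℝ} (hε : 0 < ε) :
    ∃ F : Finset S, ‖w - ∑ x ∈ F, w x • TOSdelta x‖ ≤ ε := by
  have hsum : HasSum (fun x : S => lp.single 2 x (w x)) w :=
    lp.hasSum_single ENNReal.ofNat_ne_top w
  have hsum' : HasSum (fun x : S => (w x • TOSdelta x : H)) w := by
    refine hsum.congr_fun fun x => ?_
    exact (TOS_single_eq_smul x (w x)).symm
  have h2 : ∀ᶠ F : Finset S in atTop, ‖(∑ x ∈ F, w x • TOSdelta x : H) - w‖ < ε := by
    have := hsum'
    rw [HasSum] at this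
    have := Metric.tendsto_nhds.mp this ε hε
    filter_upwards [this] with F hF
    rw [dist_eq_norm] at hF
    exact hF
  obtain ⟨F, hF⟩ := h2.exists
  exact ⟨F, by rw [← norm_neg]; simp only [neg_sub]; exact le_of_lt hF⟩

-- continuity estimate for the quadratic form
lemma TOS_quad_close (Q : H →L[ℝ] H) (w f : H) :
    |(inner ℝ w (Q w) : ℝ) - (inner ℝ f (Q f) : ℝ)|
      ≤ ‖Q‖ * ‖w - f‖ * (‖w‖ + ‖f‖) := by
  have hsplit : (inner ℝ w (Q w) : ℝ) - (inner ℝ f (Q f) : ℝ)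
      = (inner ℝ (w - f) (Q w) : ℝ) + (inner ℝ f (Q (w - f)) : ℝ) := by
    rw [map_sub, inner_sub_left, inner_sub_right]
    ring
  rw [hsplit]
  calc |(inner ℝ (w - f) (Q w) : ℝ) + (inner ℝ f (Q (w - f)) : ℝ)|
      ≤ |(inner ℝ (w - f) (Q w) : ℝ)| + |(inner ℝ f (Q (w - f)) : ℝ)| := abs_add_le _ _
    _ ≤ ‖w - f‖ * ‖Q w‖ + ‖f‖ * ‖Q (w - f)‖ := by
        gcongr <;> exact abs_real_inner_le_norm _ _
    _ ≤ ‖w - f‖ * (‖Q‖ * ‖w‖) + ‖f‖ * (‖Q‖ * ‖w - f‖) := by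
        gcongr <;> exact Q.le_opNorm _
    _ = ‖Q‖ * ‖w - f‖ * (‖w‖ + ‖f‖) := by ring

end Aux3

lemma TOS_le_of_eps {a b C : ℝ} (hC : 0 ≤ C)
    (h : ∀ ε : ℝ, 0 < ε → ε ≤ 1 → a ≤ b + ε * C) : a ≤ b := by
  by_contra hc
  push_neg at hc
  have hC1 : (0:ℝ) < C + 1 := by linarith
  set ε := min 1 ((a - b) / (2 * (C + 1))) with hεdef
  have hε0 : 0 < ε := lt_min one_pos (div_pos (by linarith) (by linarith))
  have hε1 : ε ≤ 1 := min_le_left _ _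
  have h2 : ε * C ≤ (a - b) / (2 * (C + 1)) * C :=
    mul_le_mul_of_nonneg_right (min_le_right _ _) hC
  have h3 : (a - b) / (2 * (C + 1)) * C < a - b := by
    rw [div_mul_eq_mul_div, div_lt_iff₀ (by linarith)]
    nlinarith [mul_lt_mul_of_pos_left (show C < 2 * (C + 1) by linarith) (sub_pos.mpr hc)]
  have := h ε hε0 hε1
  linarith

section Aux4

variable {S : Type*} [DecidableEq S]

local notation "H" => lp (fun _ : S => ℝ) 2

lemma TOS_rayleigh_le_one (Q : H →L[ℝ] H)
    (hQ_sa : ∀ μ ν : H, (inner ℝ (Q μ) ν : ℝ) = inner ℝ μ (Q ν))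
    (h_nonneg : ∀ x y : S, 0 ≤ (inner ℝ (TOSdelta x) (Q (TOSdelta y)) : ℝ))
    (h_pos : ∀ x y : S, ∀ᶠ n : ℕ in atTop,
      0 < (inner ℝ (TOSdelta x) ((Q ^ n) (TOSdelta y)) : ℝ))
    (h_growth : ∀ x y : S, Tendsto (fun n : ℕ => (1 / (n : ℝ)) *
        Real.log (inner ℝ (TOSdelta x) ((Q ^ n) (TOSdelta y)) : ℝ)) atTop (nhds 0))
    (ν : H) (hν : ‖ν‖ = 1) : (inner ℝ ν (Q ν) : ℝ) ≤ 1 := by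
  refine TOS_le_of_eps (show (0:ℝ) ≤ 3 + 3 * ‖Q‖ by positivity) fun ε hε hε1 => ?_
  obtain ⟨F, hF⟩ := TOS_approx ν hε
  set f : H := ∑ x ∈ F, ν x • TOSdelta x with hfdef
  have hfb : (inner ℝ f (Q f) : ℝ) ≤ ‖f‖ ^ 2 :=
    TOS_fin_bound Q hQ_sa h_nonneg h_pos h_growth F (fun x => ν x)
  have hclose := TOS_quad_close Q ν f
  have hnf : ‖f‖ ≤ 1 + ε := by
    calc ‖f‖ = ‖ν - (ν - f)‖ := by congr 1; abel
      _ ≤ ‖ν‖ + ‖ν - f‖ := norm_sub_le _ _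
      _ ≤ 1 + ε := by rw [hν]; linarith [hF]
  have hf2 : ‖f‖ ^ 2 ≤ (1 + ε) ^ 2 := by
    apply pow_le_pow_left₀ (norm_nonneg _) hnf
  have habs : (inner ℝ ν (Q ν) : ℝ) ≤ (inner ℝ f (Q f) : ℝ) + ‖Q‖ * ‖ν - f‖ * (‖ν‖ + ‖f‖) := by
    have := abs_le.mp hclose
    linarith [this.2]
  have hQ0 : (0:ℝ) ≤ ‖Q‖ := norm_nonneg _
  have herr : ‖Q‖ * ‖ν - f‖ * (‖ν‖ + ‖f‖) ≤ ‖Q‖ * ε * (2 + ε) := by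
    have h1 : ‖ν‖ + ‖f‖ ≤ 2 + ε := by rw [hν]; linarith
    have h0 : (0:ℝ) ≤ ‖ν‖ + ‖f‖ := by positivity
    calc ‖Q‖ * ‖ν - f‖ * (‖ν‖ + ‖f‖) ≤ ‖Q‖ * ε * (‖ν‖ + ‖f‖) := by
          gcongr
      _ ≤ ‖Q‖ * ε * (2 + ε) := by
          apply mul_le_mul_of_nonneg_left h1 (by positivity)
  have hfinal : (inner ℝ ν (Q ν) : ℝ) ≤ (1 + ε) ^ 2 + ‖Q‖ * ε * (2 + ε) := by
    linarith
  have hε2 : ε ^ 2 ≤ ε := by nlinarith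
  have hq : ‖Q‖ * ε ^ 2 ≤ ‖Q‖ * ε := mul_le_mul_of_nonneg_left hε2 hQ0
  nlinarith [hfinal, hε2, hq]

lemma TOS_quad_le_lam (Q : H →L[ℝ] H) (lam : ℝ)
    (hlam : ∀ u : H, ‖u‖ = 1 → (inner ℝ u (Q u) : ℝ) ≤ lam) :
    ∀ v : H, (inner ℝ v (Q v) : ℝ) ≤ lam * ‖v‖ ^ 2 := by
  intro v
  by_cases hv : ‖v‖ = 0
  · rw [norm_eq_zero] at hv
    rw [hv]
    simp
  · have hvpos : 0 < ‖v‖ := lt_of_le_of_ne (norm_nonneg _) (Ne.symm hv)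
    set u : H := ‖v‖⁻¹ • v with hudef
    have hu : ‖u‖ = 1 := by
      rw [hudef, norm_smul, norm_inv, norm_norm, inv_mul_cancel₀ (ne_of_gt hvpos)]
    have h1 := hlam u hu
    have h2 : (inner ℝ u (Q u) : ℝ) = ‖v‖⁻¹ ^ 2 * (inner ℝ v (Q v) : ℝ) := by
      rw [hudef, map_smul, real_inner_smul_left, real_inner_smul_right]
      ring
    rw [h2] at h1
    have h3 := mul_le_mul_of_nonneg_right h1 (le_of_lt (pow_pos hvpos 2))
    calc (inner ℝ v (Q v) : ℝ) = ‖v‖⁻¹ ^ 2 * (inner ℝ v (Q v) : ℝ) * ‖v‖ ^ 2 := by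
          field_simp
      _ ≤ lam * ‖v‖ ^ 2 := h3

lemma TOS_abs_quad (Q : H →L[ℝ] H) (lam : ℝ) (hlam0 : 0 ≤ lam)
    (h_nonneg : ∀ x y : S, 0 ≤ (inner ℝ (TOSdelta x) (Q (TOSdelta y)) : ℝ))
    (hlam : ∀ u : H, ‖u‖ = 1 → (inner ℝ u (Q u) : ℝ) ≤ lam)
    (w : H) : |(inner ℝ w (Q w) : ℝ)| ≤ lam * ‖w‖ ^ 2 := by
  have hfin : ∀ (F : Finset S) (c : S → ℝ),
      |(inner ℝ (∑ x ∈ F, c x • TOSdelta x) (Q (∑ x ∈ F, c x • TOSdelta x)) : ℝ)|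
        ≤ lam * ‖(∑ x ∈ F, c x • TOSdelta x : H)‖ ^ 2 := by
    intro F c
    calc |(inner ℝ (∑ x ∈ F, c x • TOSdelta x) (Q (∑ x ∈ F, c x • TOSdelta x)) : ℝ)|
        ≤ (inner ℝ (∑ x ∈ F, |c x| • TOSdelta x)
            (Q (∑ x ∈ F, (|c ·|) x • TOSdelta x)) : ℝ) := TOS_abs_compare Q h_nonneg F c
      _ ≤ lam * ‖(∑ x ∈ F, |c x| • TOSdelta x : H)‖ ^ 2 :=
          TOS_quad_le_lam Q lam hlam _
      _ = lam * ‖(∑ x ∈ F, c x • TOSdelta x : H)‖ ^ 2 := by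
          rw [TOS_norm_abs_eq F c]
  refine TOS_le_of_eps
    (show (0:ℝ) ≤ lam * (2 * ‖w‖ + 1) + ‖Q‖ * (2 * ‖w‖ + 1) by positivity)
    fun ε hε hε1 => ?_
  obtain ⟨F, hF⟩ := TOS_approx w hε
  set f : H := ∑ x ∈ F, w x • TOSdelta x with hfdef
  have hfb : |(inner ℝ f (Q f) : ℝ)| ≤ lam * ‖f‖ ^ 2 := hfin F (fun x => w x)
  have hclose := TOS_quad_close Q w f
  have hnf : ‖f‖ ≤ ‖w‖ + ε := by
    calc ‖f‖ = ‖w - (w - f)‖ := by congr 1; abel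
      _ ≤ ‖w‖ + ‖w - f‖ := norm_sub_le _ _
      _ ≤ ‖w‖ + ε := by linarith [hF]
  have hf2 : ‖f‖ ^ 2 ≤ (‖w‖ + ε) ^ 2 := pow_le_pow_left₀ (norm_nonneg _) hnf 2
  have hQ0 : (0:ℝ) ≤ ‖Q‖ := norm_nonneg _
  have hw0 : (0:ℝ) ≤ ‖w‖ := norm_nonneg _
  have habs : |(inner ℝ w (Q w) : ℝ)|
      ≤ |(inner ℝ f (Q f) : ℝ)| + ‖Q‖ * ‖w - f‖ * (‖w‖ + ‖f‖) := by
    have h1 : |(inner ℝ w (Q w) : ℝ)| - |(inner ℝ f (Q f) : ℝ)|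
        ≤ |(inner ℝ w (Q w) : ℝ) - (inner ℝ f (Q f) : ℝ)| := abs_sub_abs_le_abs_sub _ _
    linarith
  have herr : ‖Q‖ * ‖w - f‖ * (‖w‖ + ‖f‖) ≤ ‖Q‖ * ε * (2 * ‖w‖ + ε) := by
    have h1 : ‖w‖ + ‖f‖ ≤ 2 * ‖w‖ + ε := by linarith
    have h0 : (0:ℝ) ≤ ‖w‖ + ‖f‖ := by positivity
    calc ‖Q‖ * ‖w - f‖ * (‖w‖ + ‖f‖) ≤ ‖Q‖ * ε * (‖w‖ + ‖f‖) := by gcongr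
      _ ≤ ‖Q‖ * ε * (2 * ‖w‖ + ε) := mul_le_mul_of_nonneg_left h1 (by positivity)
  have hmain : |(inner ℝ w (Q w) : ℝ)|
      ≤ lam * (‖w‖ + ε) ^ 2 + ‖Q‖ * ε * (2 * ‖w‖ + ε) := by
    have := mul_le_mul_of_nonneg_left hf2 hlam0
    linarith
  have hε2 : ε ^ 2 ≤ ε := by nlinarith
  have hq : ‖Q‖ * ε ^ 2 ≤ ‖Q‖ * ε := mul_le_mul_of_nonneg_left hε2 hQ0
  have hl : lam * ε ^ 2 ≤ lam * ε := mul_le_mul_of_nonneg_left hε2 hlam0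
  nlinarith [hmain, hq, hl]

lemma TOS_opnorm_le (Q : H →L[ℝ] H)
    (hQ_sa : ∀ μ ν : H, (inner ℝ (Q μ) ν : ℝ) = inner ℝ μ (Q ν))
    (lam : ℝ) (hlam0 : 0 ≤ lam)
    (habs : ∀ w : H, |(inner ℝ w (Q w) : ℝ)| ≤ lam * ‖w‖ ^ 2) :
    ∀ u : H, ‖Q u‖ ≤ lam * ‖u‖ := by
  -- first for unit vectors
  have hunit : ∀ u : H, ‖u‖ = 1 → ‖Q u‖ ≤ lam := by
    intro u hu
    by_cases hQu : Q u = 0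
    · rw [hQu, norm_zero]; exact hlam0
    · have hQupos : 0 < ‖Q u‖ := norm_pos_iff.mpr hQu
      set v : H := ‖Q u‖⁻¹ • Q u with hvdef
      have hv : ‖v‖ = 1 := by
        rw [hvdef, norm_smul, norm_inv, norm_norm, inv_mul_cancel₀ (ne_of_gt hQupos)]
      have hpolar : 4 * (inner ℝ (Q u) v : ℝ)
          = (inner ℝ (u + v) (Q (u + v)) : ℝ) - (inner ℝ (u - v) (Q (u - v)) : ℝ) := by
        have hsym : (inner ℝ (Q v) u : ℝ) = (inner ℝ (Q u) v : ℝ) := by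
          rw [hQ_sa v u, real_inner_comm]
        have e1 : (inner ℝ (u + v) (Q (u + v)) : ℝ)
            = (inner ℝ u (Q u) : ℝ) + (inner ℝ (Q u) v : ℝ) + (inner ℝ (Q v) u : ℝ)
              + (inner ℝ v (Q v) : ℝ) := by
          rw [map_add, inner_add_left, inner_add_right, inner_add_right]
          have c1 : (inner ℝ u (Q v) : ℝ) = (inner ℝ (Q v) u : ℝ) := real_inner_comm _ _
          have c2 : (inner ℝ v (Q u) : ℝ) = (inner ℝ (Q u) v : ℝ) := real_inner_comm _ _
          rw [c1, c2]; ring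
        have e2 : (inner ℝ (u - v) (Q (u - v)) : ℝ)
            = (inner ℝ u (Q u) : ℝ) - (inner ℝ (Q u) v : ℝ) - (inner ℝ (Q v) u : ℝ)
              + (inner ℝ v (Q v) : ℝ) := by
          rw [map_sub, inner_sub_left, inner_sub_right, inner_sub_right]
          have c1 : (inner ℝ u (Q v) : ℝ) = (inner ℝ (Q v) u : ℝ) := real_inner_comm _ _
          have c2 : (inner ℝ v (Q u) : ℝ) = (inner ℝ (Q u) v : ℝ) := real_inner_comm _ _
          rw [c1, c2]; ring
        rw [e1, e2, hsym]; ring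
      have hpar : ‖u + v‖ ^ 2 + ‖u - v‖ ^ 2 = 4 := by
        have h1 := norm_add_sq_real u v
        have h2 := norm_sub_sq_real u v
        rw [hu, hv] at h1 h2
        nlinarith [h1, h2]
      have hb1 := (abs_le.mp (habs (u + v))).2
      have hb2 := (abs_le.mp (habs (u - v))).1
      have hnn : -(inner ℝ (u - v) (Q (u - v)) : ℝ) ≤ lam * ‖u - v‖ ^ 2 := by linarith
      have h4 : 4 * (inner ℝ (Q u) v : ℝ) ≤ lam * (‖u + v‖ ^ 2 + ‖u - v‖ ^ 2) := by
        rw [hpolar]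
        have := habs (u + v)
        nlinarith [hb1, hnn]
      rw [hpar] at h4
      have hQuv : (inner ℝ (Q u) v : ℝ) = ‖Q u‖ := by
        rw [hvdef, real_inner_smul_right, real_inner_self_eq_norm_sq]
        field_simp
      rw [hQuv] at h4
      linarith
  intro u
  by_cases hu : ‖u‖ = 0
  · rw [norm_eq_zero] at hu
    rw [hu]
    simp [mul_nonneg hlam0 (norm_nonneg _)]
  · have hupos : 0 < ‖u‖ := lt_of_le_of_ne (norm_nonneg _) (Ne.symm hu)
    have h1 := hunit (‖u‖⁻¹ • u)
      (by rw [norm_smul, norm_inv, norm_norm, inv_mul_cancel₀ (ne_of_gt hupos)])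
    rw [map_smul, norm_smul, norm_inv, norm_norm] at h1
    have h2 := mul_le_mul_of_nonneg_left h1 hupos.le
    rw [← mul_assoc, mul_inv_cancel₀ (ne_of_gt hupos), one_mul] at h2
    linarith [h2, mul_comm lam ‖u‖]

end Aux4

/-- Let `Q` be a bounded self-adjoint operator on `ℓ²(S)` (`S` nonempty countable)
with nonnegative matrix entries, whose entries `⟨δ_x, Qⁿ δ_y⟩` are eventually
strictly positive and satisfy `(1/n) log ⟨δ_x, Qⁿ δ_y⟩ → 0`. Then the top of the
spectrum of `Q`, i.e. `sup {⟨ν, Qν⟩ : ‖ν‖ = 1}`, equals `1`. -/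
theorem top_of_spectrum_eq_one {S : Type*} [Countable S] [Nonempty S] [DecidableEq S]
    (Q : lp (fun _ : S => ℝ) 2 →L[ℝ] lp (fun _ : S => ℝ) 2)
    (hQ_sa : ∀ μ ν : lp (fun _ : S => ℝ) 2, (inner ℝ (Q μ) ν : ℝ) = inner ℝ μ (Q ν))
    (h_nonneg : ∀ x y : S,
      0 ≤ (inner ℝ (lp.single 2 x (1 : ℝ)) (Q (lp.single 2 y (1 : ℝ))) : ℝ))
    (h_pos : ∀ x y : S, ∀ᶠ n : ℕ in atTop,
      0 < (inner ℝ (lp.single 2 x (1 : ℝ)) ((Q ^ n) (lp.single 2 y (1 : ℝ))) : ℝ))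
    (h_growth : ∀ x y : S,
      Tendsto (fun n : ℕ =>
          (1 / (n : ℝ)) *
            Real.log (inner ℝ (lp.single 2 x (1 : ℝ)) ((Q ^ n) (lp.single 2 y (1 : ℝ))) : ℝ))
        atTop (nhds 0)) :
    sSup {r : ℝ | ∃ ν : lp (fun _ : S => ℝ) 2, ‖ν‖ = 1 ∧ (inner ℝ ν (Q ν) : ℝ) = r} = 1 := by
  have h_nonneg' : ∀ x y : S,
      0 ≤ (inner ℝ (TOSdelta x) (Q (TOSdelta y)) : ℝ) := h_nonneg
  have h_pos' : ∀ x y : S, ∀ᶠ n : ℕ in atTop,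
      0 < (inner ℝ (TOSdelta x) ((Q ^ n) (TOSdelta y)) : ℝ) := h_pos
  have h_growth' : ∀ x y : S, Tendsto (fun n : ℕ => (1 / (n : ℝ)) *
      Real.log (inner ℝ (TOSdelta x) ((Q ^ n) (TOSdelta y)) : ℝ)) atTop (nhds 0) := h_growth
  set Sr := {r : ℝ | ∃ ν : lp (fun _ : S => ℝ) 2, ‖ν‖ = 1 ∧ (inner ℝ ν (Q ν) : ℝ) = r}
    with hSrdef
  have x₀ : S := Classical.arbitrary S
  have hδ : ‖TOSdelta x₀‖ = 1 := TOS_norm_delta x₀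
  have hne : Sr.Nonempty := ⟨_, TOSdelta x₀, hδ, rfl⟩
  have hbdd : BddAbove Sr := by
    refine ⟨‖Q‖, fun r hr => ?_⟩
    obtain ⟨ν, hν, hrr⟩ := hr
    rw [← hrr]
    calc (inner ℝ ν (Q ν) : ℝ) ≤ ‖ν‖ * ‖Q ν‖ := real_inner_le_norm _ _
      _ ≤ ‖ν‖ * (‖Q‖ * ‖ν‖) := by
          exact mul_le_mul_of_nonneg_left (Q.le_opNorm ν) (norm_nonneg _)
      _ = ‖Q‖ := by rw [hν]; ring
  set lam := sSup Sr with hlamdef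
  have hmem : ∀ u : lp (fun _ : S => ℝ) 2, ‖u‖ = 1 → (inner ℝ u (Q u) : ℝ) ≤ lam :=
    fun u hu => le_csSup hbdd ⟨u, hu, rfl⟩
  have hlam0 : 0 ≤ lam := le_trans (h_nonneg' x₀ x₀) (hmem _ hδ)
  have hub : lam ≤ 1 := by
    refine csSup_le hne fun r hr => ?_
    obtain ⟨ν, hν, hrr⟩ := hr
    rw [← hrr]
    exact TOS_rayleigh_le_one Q hQ_sa h_nonneg' h_pos' h_growth' ν hν
  have habs := TOS_abs_quad Q lam hlam0 h_nonneg' hmem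
  have hop := TOS_opnorm_le Q hQ_sa lam hlam0 habs
  have hpow : ∀ n : ℕ, ‖(Q ^ n) (TOSdelta x₀)‖ ≤ lam ^ n := by
    intro n
    induction n with
    | zero => simp [hδ]
    | succ n ih =>
      have h1 : (Q ^ (n+1)) (TOSdelta x₀) = Q ((Q ^ n) (TOSdelta x₀)) := by
        rw [pow_succ', ContinuousLinearMap.mul_apply]
      rw [h1, pow_succ]
      calc ‖Q ((Q ^ n) (TOSdelta x₀))‖ ≤ lam * ‖(Q ^ n) (TOSdelta x₀)‖ := hop _
        _ ≤ lam * lam ^ n := mul_le_mul_of_nonneg_left ih hlam0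
        _ = lam ^ n * lam := mul_comm _ _
  have hlb : 1 ≤ lam := by
    refine TOS_one_le_of_exp fun ε hε => ?_
    have hev := TOS_entry_lower Q x₀ x₀ (h_pos' x₀ x₀) (h_growth' x₀ x₀) hε
    obtain ⟨n, hn1, hn2⟩ := (hev.and (eventually_ge_atTop 1)).exists
    have hEn : (inner ℝ (TOSdelta x₀) ((Q ^ n) (TOSdelta x₀)) : ℝ) ≤ lam ^ n := by
      calc (inner ℝ (TOSdelta x₀) ((Q ^ n) (TOSdelta x₀)) : ℝ)
          ≤ ‖TOSdelta (x₀ : S)‖ * ‖(Q ^ n) (TOSdelta x₀)‖ := real_inner_le_norm _ _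
        _ = ‖(Q ^ n) (TOSdelta x₀)‖ := by rw [hδ, one_mul]
        _ ≤ lam ^ n := hpow n
    have hexp : Real.exp (-ε) ^ n ≤ lam ^ n := by
      have : Real.exp (-(ε * n)) = Real.exp (-ε) ^ n := by
        rw [← Real.exp_nat_mul]
        congr 1
        push_cast
        ring
      rw [← this]
      exact le_trans hn1 hEn
    exact le_of_pow_le_pow_left₀ (by omega) hlam0 hexp
  linarith
end

section
/- Let b : ℕ → ℝ satisfy: b(m) > 0 for all m ≥ 2; b is nonincreasing on {m : m ≥ 2}; sup_{m≥2} (m−1)·b(m) < ∞; and for all integers m₁ ≥ 2 and n ≥ 1, (n·m₁ − 1)·b(n·m₁) ≥ (m₁ − 1)·b(m₁). Then the limit lim_{m→∞} (m−1)·b(m) exists and equals sup_{m≥2} (m−1)·b(m). -/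
open Filter

/-- If `b(m) > 0` for `m ≥ 2`, `b` is nonincreasing on `{m ≥ 2}`,
`sup_{m≥2} (m−1)b(m) < ∞`, and `(n m₁ − 1) b(n m₁) ≥ (m₁ − 1) b(m₁)` for all
`m₁ ≥ 2`, `n ≥ 1`, then `lim_{m→∞} (m−1) b(m)` exists and equals
`sup_{m≥2} (m−1) b(m)`. -/
theorem limit_eq_sup_of_subadditive (b : ℕ → ℝ)
    (hpos : ∀ m : ℕ, 2 ≤ m → 0 < b m)
    (hmono : ∀ m m' : ℕ, 2 ≤ m → m ≤ m' → b m' ≤ b m)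
    (hbdd : BddAbove {x : ℝ | ∃ m : ℕ, 2 ≤ m ∧ x = ((m : ℝ) - 1) * b m})
    (hsub : ∀ m₁ : ℕ, 2 ≤ m₁ → ∀ n : ℕ, 1 ≤ n →
      ((m₁ : ℝ) - 1) * b m₁ ≤ (((n * m₁ : ℕ) : ℝ) - 1) * b (n * m₁)) :
    Tendsto (fun m : ℕ => ((m : ℝ) - 1) * b m) atTop
      (nhds (sSup {x : ℝ | ∃ m : ℕ, 2 ≤ m ∧ x = ((m : ℝ) - 1) * b m})) := by
  set Sset := {x : ℝ | ∃ m : ℕ, 2 ≤ m ∧ x = ((m : ℝ) - 1) * b m} with hSset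
  set S := sSup Sset with hSdef
  have hne : Sset.Nonempty := ⟨((2 : ℝ) - 1) * b 2, 2, le_refl 2, rfl⟩
  have hmem : ∀ k : ℕ, 2 ≤ k → ((k : ℝ) - 1) * b k ≤ S :=
    fun k hk => le_csSup hbdd ⟨k, hk, rfl⟩
  rw [tendsto_order]
  constructor
  · intro a ha
    obtain ⟨x, ⟨m₁, hm₁, rfl⟩, hax⟩ := exists_lt_of_lt_csSup hne ha
    set c := ((m₁ : ℝ) - 1) * b m₁ with hcdef
    have hm₁R : (2 : ℝ) ≤ (m₁ : ℝ) := by exact_mod_cast hm₁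
    have hc : 0 < c := mul_pos (by linarith) (hpos m₁ hm₁)
    have hcS : c ≤ S := hmem m₁ hm₁
    have hca : 0 < c - a := by linarith
    obtain ⟨N, hN⟩ := exists_nat_gt ((m₁ : ℝ) * S / (c - a))
    rw [eventually_atTop]
    refine ⟨(N + 1) * m₁, fun m hm => ?_⟩
    have hm₁pos : 0 < m₁ := by omega
    set n := m / m₁ with hn
    have hnN : N + 1 ≤ n := (Nat.le_div_iff_mul_le hm₁pos).2 hm
    have hnm : n * m₁ ≤ m := Nat.div_mul_le_self m m₁
    have hmod : m % m₁ < m₁ := Nat.mod_lt m hm₁pos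
    have hdm : m₁ * n + m % m₁ = m := Nat.div_add_mod m m₁
    have hmlt : m < (n + 1) * m₁ := by
      calc m = m₁ * n + m % m₁ := hdm.symm
        _ < m₁ * n + m₁ := Nat.add_lt_add_left hmod _
        _ = (n + 1) * m₁ := by ring
    set k := (n + 1) * m₁ with hk
    have hn1 : 1 ≤ n := by omega
    have hk2 : 2 ≤ k := by
      have : m₁ ≤ k := by
        have : 1 * m₁ ≤ (n + 1) * m₁ := Nat.mul_le_mul_right m₁ (by omega)
        simpa using this
      omega
    have hm2 : 2 ≤ m := by
      have h1 : m₁ ≤ (N + 1) * m₁ := Nat.le_mul_of_pos_left m₁ (by omega)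
      omega
    set D : ℝ := (k : ℝ) - 1 with hD
    have hkR : (2 : ℝ) ≤ (k : ℝ) := by exact_mod_cast hk2
    have hDpos : 0 < D := by simp only [hD]; linarith
    have hDb : c ≤ D * b k := by
      have := hsub m₁ hm₁ (n + 1) (by omega)
      simpa [hD, hk] using this
    have hDS : D * b k ≤ S := hmem k hk2
    have hbk_pos : 0 < b k := hpos k hk2
    -- D is large
    have hkval : (k : ℝ) = (n : ℝ) * m₁ + m₁ := by
      rw [hk]; push_cast; ring
    have hnR : (N : ℝ) + 1 ≤ (n : ℝ) := by exact_mod_cast hnN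
    have hnnm : (n : ℝ) ≤ (n : ℝ) * m₁ := by
      have : n ≤ n * m₁ := Nat.le_mul_of_pos_right n hm₁pos
      exact_mod_cast this
    have hDgt : (m₁ : ℝ) * S / (c - a) < D := by
      have : (m₁ : ℝ) * S / (c - a) < (N : ℝ) := hN
      have h2 : D = (n : ℝ) * m₁ + m₁ - 1 := by rw [hD, hkval]
      linarith
    have hmSD : (m₁ : ℝ) * S < D * (c - a) := by
      have := (div_lt_iff₀ hca).1 hDgt
      linarith [this]
    have hm₁bk : (m₁ : ℝ) * b k < c - a := by
      have h1 : (m₁ : ℝ) * (D * b k) ≤ (m₁ : ℝ) * S :=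
        mul_le_mul_of_nonneg_left hDS (by linarith)
      have h2 : (m₁ : ℝ) * (D * b k) < D * (c - a) := lt_of_le_of_lt h1 hmSD
      -- divide by D
      have h3 : D * ((m₁ : ℝ) * b k) < D * (c - a) := by ring_nf; ring_nf at h2; linarith
      exact lt_of_mul_lt_mul_left h3 (le_of_lt hDpos)
    -- b m ≥ b k
    have hbm : b k ≤ b m := hmono m k hm2 (le_of_lt hmlt)
    have hnm₁R : ((n : ℝ) * m₁ - 1) ≤ (m : ℝ) - 1 := by
      have : ((n * m₁ : ℕ) : ℝ) ≤ (m : ℝ) := by exact_mod_cast hnm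
      push_cast at this
      linarith
    have hnm₁pos : (0 : ℝ) ≤ (n : ℝ) * m₁ - 1 := by
      have h2 : (2 : ℕ) ≤ n * m₁ := le_trans hm₁ (Nat.le_mul_of_pos_left m₁ hn1)
      have h3 : (2 : ℝ) ≤ (n : ℝ) * m₁ := by exact_mod_cast h2
      linarith
    have key : ((n : ℝ) * m₁ - 1) * b k ≤ ((m : ℝ) - 1) * b m := by
      apply mul_le_mul hnm₁R hbm (le_of_lt hbk_pos) (by linarith)
    have hfinal : a < ((n : ℝ) * m₁ - 1) * b k := by
      have hD2 : (n : ℝ) * m₁ - 1 = D - m₁ := by rw [hD, hkval]; ring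
      rw [hD2]
      have : (D - m₁) * b k = D * b k - m₁ * b k := by ring
      rw [this]
      linarith
    linarith
  · intro a ha
    rw [eventually_atTop]
    exact ⟨2, fun m hm => lt_of_le_of_lt (hmem m hm) ha⟩
end

section
/- Let m ≥ 3 be an integer and let b : ℕ → ℝ satisfy: b(k) > 0 for 2 ≤ k ≤ m; b is nonincreasing on {2, …, m}; b(2) ≤ (k−1)·b(k) and (k−1)·b(k) < 2 for all 2 ≤ k ≤ m; and b(2) ≥ 2·(m−2)/(m−1). Then b is strictly decreasing on {2, …, m}, i.e. b(2) > b(3) > … > b(m). -/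
/-- If `b(k) > 0` and `b` is nonincreasing on `{2,…,m}`, with
`b(2) ≤ (k−1) b(k) < 2` for all `2 ≤ k ≤ m` and `b(2) ≥ 2(m−2)/(m−1)`,
then `b` is strictly decreasing on `{2,…,m}`. -/
theorem strict_decrease_of_sandwich (m : ℕ) (hm : 3 ≤ m) (b : ℕ → ℝ)
    (hpos : ∀ k : ℕ, 2 ≤ k → k ≤ m → 0 < b k)
    (hmono : ∀ k k' : ℕ, 2 ≤ k → k ≤ k' → k' ≤ m → b k' ≤ b k)
    (hsandwich : ∀ k : ℕ, 2 ≤ k → k ≤ m →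
      b 2 ≤ ((k : ℝ) - 1) * b k ∧ ((k : ℝ) - 1) * b k < 2)
    (hG : 2 * ((m : ℝ) - 2) / ((m : ℝ) - 1) ≤ b 2) :
    ∀ k : ℕ, 2 ≤ k → k < m → b (k + 1) < b k := by
  intro k hk hkm
  by_contra h
  push_neg at h
  have hk1m : k + 1 ≤ m := hkm
  have h1 := (hsandwich k hk (le_of_lt hkm)).1
  have h2 := (hsandwich (k + 1) (by omega) hk1m).2
  have hposk1 : 0 < b (k + 1) := hpos (k + 1) (by omega) hk1m
  have hK : (2 : ℝ) ≤ (k : ℝ) := by exact_mod_cast hk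
  have hKM : (k : ℝ) + 1 ≤ (m : ℝ) := by exact_mod_cast hk1m
  have hM1 : (0 : ℝ) < (m : ℝ) - 1 := by
    have : (3 : ℝ) ≤ (m : ℝ) := by exact_mod_cast hm
    linarith
  have hG' : 2 * ((m : ℝ) - 2) ≤ b 2 * ((m : ℝ) - 1) :=
    (div_le_iff₀ hM1).mp hG
  have hcast : ((k : ℝ) + 1 - 1) = (k : ℝ) := by ring
  push_cast at h2
  have h2' : (k : ℝ) * b (k + 1) < 2 := by linarith [h2]
  have h1' : b 2 ≤ ((k : ℝ) - 1) * b (k + 1) := by nlinarith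
  nlinarith [mul_lt_mul_of_pos_left h2' hM1, mul_le_mul_of_nonneg_left h1' (by linarith : (0:ℝ) ≤ (k:ℝ)), hpos 2 le_rfl (by omega)]
end
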